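/- arXiv:1104.3630 — 5 statements merged into one kernel-verified Lean document; each statement's English description precedes it below -/
import Mathlib

section
/- Let {C_k} be an equivalence n-simplex, let 1 ≤ k ≤ n, and let c, c′ ∈ A_k ∖ B_k satisfy c ≈ c′ (componentwise ∼). Then F(c) = F(c′), and for every ℓ ∈ F(c) one has d_ℓ(c), d_ℓ(c′) ∈ A_{k−1} ∖ B_{k−1} with d_ℓ(c) ≈ d_ℓ(c′). Consequently the maps D_k are well-defined on the quotient sets C_k. -/
open Finset
open scoped Classical

/-- Strictly increasing `m`-tuples with values in `[n] = {0, 1, …, n}`.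
The set `A_k` of the equivalence `n`-simplex corresponds to `Chain n (k+1)`. -/
def Chain (n m : ℕ) : Type :=
  {c : Fin m → Fin (n + 1) // StrictMono c}

/-- The `ℓ`-th face map: delete the `ℓ`-th coordinate of a tuple. -/
def face {n m : ℕ} (ℓ : Fin (m + 1)) (c : Chain n (m + 1)) : Chain n m :=
  ⟨c.1 ∘ ℓ.succAbove, c.2.comp (Fin.strictMono_succAbove ℓ)⟩

/-- The predicate `B`: some two adjacent coordinates are related by `r`. -/
def hasAdj {n : ℕ} (r : Fin (n + 1) → Fin (n + 1) → Prop) {m : ℕ} (c : Chain n m) : Prop :=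
  ∃ i j : Fin m, (i : ℕ) + 1 = (j : ℕ) ∧ r (c.1 i) (c.1 j)

/-- The componentwise relation `≈` on tuples. -/
def cApprox {n : ℕ} (r : Fin (n + 1) → Fin (n + 1) → Prop) {m : ℕ}
    (c c' : Chain n m) : Prop :=
  ∀ i, r (c.1 i) (c'.1 i)

/-- `C_k`: the quotient of `A_k ∖ B_k` by the componentwise relation `≈`. -/
def CSet (n : ℕ) (r : Fin (n + 1) → Fin (n + 1) → Prop) (k : ℕ) : Type :=
  Quot (fun c c' : {c : Chain n (k + 1) // ¬ hasAdj r c} => cApprox r c.1 c'.1)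

/-- The class `[c] ∈ C_k` of a tuple `c ∈ A_k ∖ B_k`. -/
def cls {n : ℕ} (r : Fin (n + 1) → Fin (n + 1) → Prop) {k : ℕ} (c : Chain n (k + 1))
    (hc : ¬ hasAdj r c) : CSet n r k :=
  Quot.mk _ (⟨c, hc⟩ : {c : Chain n (k + 1) // ¬ hasAdj r c})

/-- `D` is the family of differentials, `D k` being the statement's
`D_{k+1} : ℂ[C_{k+1}] → ℂ[C_k]`, given on basis elements `[c]` by
`D_{k+1}([c]) = ∑_{ℓ ∈ F(c)} (−1)^ℓ [d_ℓ(c)]`. -/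
def IsD (n : ℕ) (r : Fin (n + 1) → Fin (n + 1) → Prop)
    (D : ∀ k : ℕ, ((CSet n r (k + 1)) →₀ ℂ) →ₗ[ℂ] ((CSet n r k) →₀ ℂ)) : Prop :=
  ∀ (k : ℕ) (c : Chain n (k + 2)) (hc : ¬ hasAdj r c),
    D k (Finsupp.single (cls r c hc) 1) =
      ∑ ℓ : Fin (k + 2),
        if h : ¬ hasAdj r (face ℓ c) then
          ((-1 : ℂ) ^ (ℓ : ℕ)) • Finsupp.single (cls r (face ℓ c) h) 1
        else 0

/-- `D0` is the augmentation `D_0 : ℂ[C_0] → ℂ`, sending each basis element to `1`. -/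
def IsD0 (n : ℕ) (r : Fin (n + 1) → Fin (n + 1) → Prop)
    (D0 : ((CSet n r 0) →₀ ℂ) →ₗ[ℂ] ℂ) : Prop :=
  ∀ q : CSet n r 0, D0 (Finsupp.single q 1) = 1

lemma hasAdj_congr {n : ℕ} {r : Fin (n + 1) → Fin (n + 1) → Prop} (hr : Equivalence r)
    {m : ℕ} {a b : Chain n m} (h : cApprox r a b) : hasAdj r a ↔ hasAdj r b := by
  constructor
  · rintro ⟨i, j, hij, hrab⟩
    exact ⟨i, j, hij, hr.trans (hr.symm (h i)) (hr.trans hrab (h j))⟩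
  · rintro ⟨i, j, hij, hrab⟩
    exact ⟨i, j, hij, hr.trans (h i) (hr.trans hrab (hr.symm (h j)))⟩

/-- Well-definedness of the differentials of an equivalence `n`-simplex: if
`c ≈ c'` in `A_k ∖ B_k` (here `k` is the statement's `k`, written as `k+1` with `1 ≤ k+1 ≤ n`),
then `F(c) = F(c')`, the corresponding faces satisfy `d_ℓ(c), d_ℓ(c') ∈ A_{k-1} ∖ B_{k-1}`
with `d_ℓ(c) ≈ d_ℓ(c')`; consequently the map `D_k` is well defined on `ℂ[C_k]`. -/
theorem stmt4 (n : ℕ) (r : Fin (n + 1) → Fin (n + 1) → Prop) (hr : Equivalence r)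
    (hadj : ∀ i j : Fin (n + 1), r i j → (i : ℕ) ≠ (j : ℕ) + 1 ∧ (j : ℕ) ≠ (i : ℕ) + 1)
    (k : ℕ) (hk : k + 1 ≤ n)
    (c c' : Chain n (k + 2)) (hc : ¬ hasAdj r c) (hc' : ¬ hasAdj r c')
    (hcc' : cApprox r c c') :
    (∀ ℓ : Fin (k + 2), ¬ hasAdj r (face ℓ c) ↔ ¬ hasAdj r (face ℓ c')) ∧
    (∀ ℓ : Fin (k + 2), ¬ hasAdj r (face ℓ c) → cApprox r (face ℓ c) (face ℓ c')) ∧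
    ∃ D : ((CSet n r (k + 1)) →₀ ℂ) →ₗ[ℂ] ((CSet n r k) →₀ ℂ),
      ∀ (b : Chain n (k + 2)) (hb : ¬ hasAdj r b),
        D (Finsupp.single (cls r b hb) 1) =
          ∑ ℓ : Fin (k + 2),
            if h : ¬ hasAdj r (face ℓ b) then
              ((-1 : ℂ) ^ (ℓ : ℕ)) • Finsupp.single (cls r (face ℓ b) h) 1
            else 0 := by
  have hface : ∀ (a b : Chain n (k + 2)), cApprox r a b → ∀ ℓ : Fin (k + 2),
      cApprox r (face ℓ a) (face ℓ b) := fun a b hab ℓ i => hab _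
  refine ⟨fun ℓ => not_congr (hasAdj_congr hr (hface c c' hcc' ℓ)),
    fun ℓ _ => hface c c' hcc' ℓ, ?_⟩
  set g : {x : Chain n (k + 2) // ¬ hasAdj r x} → ((CSet n r k) →₀ ℂ) :=
    fun x => ∑ ℓ : Fin (k + 2),
      if h : ¬ hasAdj r (face ℓ x.1) then
        ((-1 : ℂ) ^ (ℓ : ℕ)) • Finsupp.single (cls r (face ℓ x.1) h) 1
      else 0 with hg
  have gwd : ∀ a b : {x : Chain n (k + 2) // ¬ hasAdj r x},
      cApprox r a.1 b.1 → g a = g b := by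
    intro a b hab
    apply Finset.sum_congr rfl
    intro ℓ _
    have hfa := hface a.1 b.1 hab ℓ
    have hiff : ¬ hasAdj r (face ℓ a.1) ↔ ¬ hasAdj r (face ℓ b.1) :=
      not_congr (hasAdj_congr hr hfa)
    by_cases h : ¬ hasAdj r (face ℓ a.1)
    · rw [dif_pos h, dif_pos (hiff.mp h)]
      have heq : cls r (face ℓ a.1) h = cls r (face ℓ b.1) (hiff.mp h) :=
        Quot.sound hfa
      rw [heq]
    · rw [dif_neg h, dif_neg (fun h' => h (hiff.mpr h'))]
  refine ⟨Finsupp.linearCombination ℂ (Quot.lift g gwd), ?_⟩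
  intro b hb
  erw [Finsupp.linearCombination_single, one_smul]
  rfl
end

section
/- For an equivalence n-simplex {C_k}, the composite D_{k−1} ∘ D_k : ℂ[C_k] → ℂ[C_{k−2}] is the zero map for every 2 ≤ k ≤ n, and moreover D_0 ∘ D_1 = 0. Hence ⋯ → ℂ[C_k] →^{D_k} ℂ[C_{k−1}] → ⋯ → ℂ[C_0] →^{D_0} ℂ → 0 is a chain complex. -/
open Finset
open scoped Classical

section Aux

lemma val_succAbove {N : ℕ} (p : Fin (N+1)) (i : Fin N) :
    (p.succAbove i : ℕ) = if (i:ℕ) < (p:ℕ) then (i:ℕ) else (i:ℕ)+1 := by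
  rw [Fin.succAbove]
  split_ifs with h1 h2 h3 <;> simp_all [Fin.lt_def]

variable {n j : ℕ} {r : Fin (n+1) → Fin (n+1) → Prop}

lemma face_apply {m : ℕ} (ℓ : Fin (m+1)) (d : Chain n (m+1)) (u : Fin m) :
    (face ℓ d).1 u = d.1 (ℓ.succAbove u) := rfl

lemma chain_ext {m : ℕ} {d d' : Chain n m} (h : ∀ u, d.1 u = d'.1 u) : d = d' :=
  Subtype.ext (funext h)

variable (c : Chain n (j+3))

lemma c1_congr {a b : Fin (j+3)} (h : (a:ℕ) = (b:ℕ)) : c.1 a = c.1 b := by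
  exact congrArg c.1 (Fin.ext h)

/-- clamped coordinate access -/
def cv (i : ℕ) : Fin (n+1) := c.1 ⟨min i (j+2), by omega⟩

lemma cv_eq (i : ℕ) (h : i < j+3) : cv c i = c.1 ⟨i, h⟩ := by
  unfold cv; apply c1_congr; simp; omega

/-- `b_P`: the `(P+1)`-st face of `c` is bad -/
def bP (rr : Fin (n+1) → Fin (n+1) → Prop) (P : ℕ) : Prop :=
  P + 2 ≤ j + 2 ∧ rr (cv c P) (cv c (P+2))

/-- the double face deleting positions `P` and `P+1` -/
def dbl (P : ℕ) : Chain n (j+1) :=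
  ⟨fun u => c.1 (if (u:ℕ) < P then (u.castSucc.castSucc) else u.succ.succ),
   fun u v huv => c.2 (by
      have := Fin.lt_def.1 huv
      split_ifs <;> simp only [Fin.lt_def, Fin.coe_castSucc, Fin.val_succ] <;> omega)⟩

lemma dbl_apply (P : ℕ) (u : Fin (j+1)) :
    (dbl c P).1 u = c.1 (if (u:ℕ) < P then (u.castSucc.castSucc) else u.succ.succ) := rfl

lemma dbl_val (P : ℕ) (u : Fin (j+1)) :
    (((if (u:ℕ) < P then (u.castSucc.castSucc) else u.succ.succ) : Fin (j+3)) : ℕ)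
      = if (u:ℕ) < P then (u:ℕ) else (u:ℕ)+2 := by
  split_ifs <;> simp

end Aux

section Aux2
variable {n j : ℕ} {r : Fin (n+1) → Fin (n+1) → Prop}
variable (c : Chain n (j+3))

set_option maxHeartbeats 2000000 in
/-- characterization of badness of a single face of a good chain -/
lemma hasAdj_face_iff (hc : ¬ hasAdj r c) (ℓ : Fin (j+3)) :
    hasAdj r (face ℓ c) ↔
      (1 ≤ (ℓ:ℕ) ∧ (ℓ:ℕ)+1 ≤ j+2 ∧ r (cv c ((ℓ:ℕ)-1)) (cv c ((ℓ:ℕ)+1))) := by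
  constructor
  · rintro ⟨i, i', hii', hri⟩
    rw [face_apply, face_apply] at hri
    have hvi := val_succAbove ℓ i
    have hvi' := val_succAbove ℓ i'
    rcases Nat.lt_or_ge (i:ℕ) (ℓ:ℕ) with h1 | h1 <;>
      rcases Nat.lt_or_ge (i':ℕ) (ℓ:ℕ) with h2 | h2
    · exact absurd ⟨_, _, by rw [hvi, hvi', if_pos h1, if_pos h2]; omega, hri⟩ hc
    · -- junction case : ℓ = i+1
      have hℓ : (ℓ:ℕ) = (i:ℕ)+1 := by omega
      have hb : (i':ℕ) ≤ j+1 := Nat.lt_succ_iff.1 i'.isLt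
      refine ⟨by omega, by omega, ?_⟩
      have hm1 : (ℓ:ℕ)-1 < j+3 := by omega
      have hm2 : (ℓ:ℕ)+1 < j+3 := by omega
      rw [cv_eq c _ hm1, cv_eq c _ hm2]
      have e1 : c.1 ⟨(ℓ:ℕ)-1, hm1⟩ = c.1 (ℓ.succAbove i) :=
        c1_congr c (by simp only [Fin.val_mk, hvi]; rw [if_pos h1]; omega)
      have e2 : c.1 ⟨(ℓ:ℕ)+1, hm2⟩ = c.1 (ℓ.succAbove i') :=
        c1_congr c (by simp only [Fin.val_mk, hvi']; rw [if_neg (Nat.not_lt.2 h2)]; omega)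
      rw [e1, e2]; exact hri
    · omega
    · exact absurd ⟨_, _, by rw [hvi, hvi', if_neg (by omega), if_neg (by omega)]; omega, hri⟩ hc
  · rintro ⟨h1, h2, hr'⟩
    rw [cv_eq c _ (by omega), cv_eq c _ (by omega)] at hr'
    have hl1 : (ℓ:ℕ) - 1 < j + 2 := by omega
    have hl2 : (ℓ:ℕ) < j + 2 := by omega
    refine ⟨⟨(ℓ:ℕ)-1, hl1⟩, ⟨(ℓ:ℕ), hl2⟩, by rw [Fin.val_mk, Fin.val_mk]; omega, ?_⟩
    rw [face_apply, face_apply]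
    have e1 : c.1 (ℓ.succAbove ⟨(ℓ:ℕ)-1, hl1⟩) = c.1 ⟨(ℓ:ℕ)-1, by omega⟩ :=
      c1_congr c (by simp only [val_succAbove, Fin.val_mk]; rw [if_pos (by omega)])
    have e2 : c.1 (ℓ.succAbove ⟨(ℓ:ℕ), hl2⟩) = c.1 ⟨(ℓ:ℕ)+1, by omega⟩ :=
      c1_congr c (by simp only [val_succAbove, Fin.val_mk]; rw [if_neg (by omega)])
    rw [e1, e2]; exact hr'

end Aux2

section Aux3
variable {n j : ℕ} {r : Fin (n+1) → Fin (n+1) → Prop}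
variable (c : Chain n (j+3))

lemma hasAdj_dbl_iff (hc : ¬ hasAdj r c) (P : ℕ) :
    hasAdj r (dbl c P) ↔ (1 ≤ P ∧ P ≤ j ∧ r (cv c (P-1)) (cv c (P+2))) := by
  constructor
  · rintro ⟨u, u', huu', hru⟩
    rw [dbl_apply, dbl_apply] at hru
    have hu := u.isLt
    have hu' := u'.isLt
    have hv := dbl_val P u
    have hv' := dbl_val P u'
    rcases Nat.lt_or_ge (u:ℕ) P with h1 | h1 <;>
      rcases Nat.lt_or_ge (u':ℕ) P with h2 | h2
    · refine absurd ⟨_, _, ?_, hru⟩ hc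
      rw [hv, hv', if_pos h1, if_pos h2]; omega
    · -- junction : P = u+1
      refine ⟨by omega, by omega, ?_⟩
      rw [cv_eq c _ (by omega), cv_eq c _ (by omega)]
      have e1 : c.1 ⟨P-1, by omega⟩
          = c.1 (if (u:ℕ) < P then (u.castSucc.castSucc) else u.succ.succ) :=
        c1_congr c (by rw [Fin.val_mk, hv, if_pos h1]; omega)
      have e2 : c.1 ⟨P+2, by omega⟩
          = c.1 (if (u':ℕ) < P then (u'.castSucc.castSucc) else u'.succ.succ) :=
        c1_congr c (by rw [Fin.val_mk, hv', if_neg (Nat.not_lt.2 h2)]; omega)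
      rw [e1, e2]; exact hru
    · omega
    · refine absurd ⟨_, _, ?_, hru⟩ hc
      rw [hv, hv', if_neg (Nat.not_lt.2 h1), if_neg (Nat.not_lt.2 h2)]; omega
  · rintro ⟨h1, h2, hr'⟩
    rw [cv_eq c _ (by omega), cv_eq c _ (by omega)] at hr'
    have hm1 : P - 1 < j + 1 := by omega
    have hm2 : P < j + 1 := by omega
    refine ⟨⟨P-1, hm1⟩, ⟨P, hm2⟩, by rw [Fin.val_mk, Fin.val_mk]; omega, ?_⟩
    rw [dbl_apply, dbl_apply]
    have e1 : c.1 (if ((⟨P-1, hm1⟩ : Fin (j+1)):ℕ) < P then (⟨P-1, hm1⟩ : Fin (j+1)).castSucc.castSucc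
          else (⟨P-1, hm1⟩ : Fin (j+1)).succ.succ) = c.1 ⟨P-1, by omega⟩ :=
      c1_congr c (by rw [dbl_val]; simp only [Fin.val_mk]; split_ifs <;> omega)
    have e2 : c.1 (if ((⟨P, hm2⟩ : Fin (j+1)):ℕ) < P then (⟨P, hm2⟩ : Fin (j+1)).castSucc.castSucc
          else (⟨P, hm2⟩ : Fin (j+1)).succ.succ) = c.1 ⟨P+2, by omega⟩ :=
      c1_congr c (by rw [dbl_val]; simp only [Fin.val_mk]; split_ifs <;> omega)
    rw [e1, e2]; exact hr'

end Aux3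

section Aux4
variable {n j : ℕ} {r : Fin (n+1) → Fin (n+1) → Prop}
variable (c : Chain n (j+3))

lemma dbl_eq_castSucc (p : Fin (j+2)) : face p (face p.castSucc c) = dbl c (p:ℕ) := by
  apply chain_ext; intro u
  rw [face_apply, face_apply, dbl_apply]
  apply c1_congr
  rw [val_succAbove, dbl_val]
  simp only [val_succAbove, Fin.coe_castSucc]
  split_ifs <;> omega

lemma dbl_eq_succ (p : Fin (j+2)) : face p (face p.succ c) = dbl c (p:ℕ) := by
  apply chain_ext; intro u
  rw [face_apply, face_apply, dbl_apply]
  apply c1_congr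
  rw [val_succAbove, dbl_val]
  simp only [val_succAbove, Fin.val_succ]
  split_ifs <;> omega

lemma hasAdj_face_succ (hc : ¬ hasAdj r c) (p : Fin (j+2)) :
    hasAdj r (face p.succ c) ↔ bP c r (p:ℕ) := by
  rw [hasAdj_face_iff c hc]
  simp only [Fin.val_succ, Nat.add_sub_cancel]
  constructor
  · rintro ⟨-, h2, h3⟩; exact ⟨by omega, h3⟩
  · rintro ⟨h2, h3⟩; exact ⟨by omega, by omega, h3⟩

lemma hasAdj_face_castSucc (hc : ¬ hasAdj r c) (p : Fin (j+2)) :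
    hasAdj r (face p.castSucc c) ↔ (1 ≤ (p:ℕ) ∧ r (cv c ((p:ℕ)-1)) (cv c ((p:ℕ)+1))) := by
  rw [hasAdj_face_iff c hc]
  simp only [Fin.coe_castSucc]
  constructor
  · rintro ⟨h1, h2, h3⟩; exact ⟨h1, h3⟩
  · rintro ⟨h1, h3⟩; exact ⟨h1, by have := p.isLt; omega, h3⟩

lemma bP_not_dbad (hr : Equivalence r) (hc : ¬ hasAdj r c) (P : ℕ) (hb : bP c r P) :
    ¬ hasAdj r (dbl c P) := by
  rw [hasAdj_dbl_iff c hc]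
  rintro ⟨h1, h2, hd⟩
  have hx : r (cv c (P-1)) (cv c P) := hr.trans hd (hr.symm hb.2)
  rw [cv_eq c _ (by omega), cv_eq c _ (by omega)] at hx
  exact hc ⟨⟨P-1, by omega⟩, ⟨P, by omega⟩, by rw [Fin.val_mk, Fin.val_mk]; omega, hx⟩

lemma b'_not_dbad (hr : Equivalence r) (hc : ¬ hasAdj r c) (P : ℕ) (h1 : 1 ≤ P)
    (hb' : r (cv c (P-1)) (cv c (P+1))) : ¬ hasAdj r (dbl c P) := by
  rw [hasAdj_dbl_iff c hc]
  rintro ⟨-, h2, hd⟩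
  have hx : r (cv c (P+1)) (cv c (P+2)) := hr.trans (hr.symm hb') hd
  rw [cv_eq c _ (by omega), cv_eq c _ (by omega)] at hx
  exact hc ⟨⟨P+1, by omega⟩, ⟨P+2, by omega⟩, by rw [Fin.val_mk, Fin.val_mk], hx⟩

set_option maxHeartbeats 1000000 in
lemma dbl_approx (hr : Equivalence r) (P : ℕ) (h1 : 1 ≤ P) (hP : P ≤ j+1)
    (hb' : r (cv c (P-1)) (cv c (P+1))) : cApprox r (dbl c (P-1)) (dbl c P) := by
  intro u
  rw [dbl_apply, dbl_apply]
  rcases Nat.lt_trichotomy (u:ℕ) (P-1) with h | h | h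
  · rw [if_pos h, if_pos (by omega)]; exact hr.refl _
  · rw [if_neg (by omega), if_pos (by omega)]
    have e1 : c.1 u.succ.succ = c.1 ⟨P+1, by omega⟩ :=
      c1_congr c (by simp only [Fin.val_succ]; omega)
    have e2 : c.1 u.castSucc.castSucc = c.1 ⟨P-1, by omega⟩ :=
      c1_congr c (by simp only [Fin.coe_castSucc]; omega)
    rw [e1, e2]
    rw [cv_eq c _ (by omega), cv_eq c _ (by omega)] at hb'
    exact hr.symm hb'
  · rw [if_neg (by omega), if_neg (by omega)]; exact hr.refl _

lemma dbl_cls_eq (hr : Equivalence r) (P : ℕ) (h1 : 1 ≤ P) (hP : P ≤ j+1)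
    (hb' : r (cv c (P-1)) (cv c (P+1)))
    (hg1 : ¬ hasAdj r (dbl c (P-1))) (hg2 : ¬ hasAdj r (dbl c P)) :
    cls r (dbl c (P-1)) hg1 = cls r (dbl c P) hg2 :=
  Quot.sound (dbl_approx c hr P h1 hP hb')

end Aux4

section Aux5
variable {n j : ℕ}

/-- summand of the composite `D ∘ D` -/
noncomputable def Tm (r : Fin (n+1) → Fin (n+1) → Prop) (c : Chain n (j+3))
    (ℓ : Fin (j+3)) (m : Fin (j+2)) : CSet n r j →₀ ℂ :=
  if _h : ¬ hasAdj r (face ℓ c) then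
    (if h2 : ¬ hasAdj r (face m (face ℓ c)) then
      ((-1:ℂ)^(ℓ:ℕ) * (-1:ℂ)^(m:ℕ)) • Finsupp.single (cls r (face m (face ℓ c)) h2) 1
    else 0)
  else 0

noncomputable def gN (r : Fin (n+1) → Fin (n+1) → Prop) (hr : Equivalence r)
    (c : Chain n (j+3)) (hc : ¬ hasAdj r c) (P : ℕ) : CSet n r j →₀ ℂ :=
  if h : bP c r P then Finsupp.single (cls r (dbl c P) (bP_not_dbad c hr hc P h)) 1 else 0

noncomputable def fN (r : Fin (n+1) → Fin (n+1) → Prop) (hr : Equivalence r)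
    (c : Chain n (j+3)) (hc : ¬ hasAdj r c) (P : ℕ) : CSet n r j →₀ ℂ :=
  if P = 0 then 0 else gN r hr c hc (P-1)

variable {r : Fin (n+1) → Fin (n+1) → Prop}

lemma fN_succ (hr : Equivalence r) (c : Chain n (j+3)) (hc : ¬ hasAdj r c) (P : ℕ) :
    fN r hr c hc (P+1) = gN r hr c hc P := by
  simp [fN]

lemma gN_last (hr : Equivalence r) (c : Chain n (j+3)) (hc : ¬ hasAdj r c) (P : ℕ)
    (hP : j < P) : gN r hr c hc P = 0 := by
  rw [gN, dif_neg]
  rintro ⟨h1, -⟩; omega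

lemma near_term (hr : Equivalence r) (c : Chain n (j+3)) (hc : ¬ hasAdj r c) (p : Fin (j+2)) :
    Tm r c p.castSucc p + Tm r c p.succ p
      = gN r hr c hc (p:ℕ) - fN r hr c hc (p:ℕ) := by
  have hP2 : (p:ℕ) < j + 2 := p.isLt
  have hs1 : ((-1:ℂ)^((p.castSucc : Fin (j+3)):ℕ) * (-1:ℂ)^(p:ℕ)) = 1 := by
    rw [Fin.coe_castSucc, ← pow_add]
    exact Even.neg_one_pow ⟨_, rfl⟩
  have hs2 : ((-1:ℂ)^((p.succ : Fin (j+3)):ℕ) * (-1:ℂ)^(p:ℕ)) = -1 := by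
    rw [Fin.val_succ, ← pow_add]
    exact Odd.neg_one_pow ⟨(p:ℕ), by omega⟩
  have epred : (p:ℕ) - 1 + 2 = (p:ℕ) + 1 ∨ (p:ℕ) = 0 := by omega
  rw [Tm, Tm]
  simp only [dbl_eq_castSucc c p, dbl_eq_succ c p, hs1, hs2]
  by_cases hb : bP c r (p:ℕ) <;>
    by_cases hb' : (1 ≤ (p:ℕ) ∧ r (cv c ((p:ℕ)-1)) (cv c ((p:ℕ)+1)))
  · -- both bad: LHS = 0 + 0, RHS = s - s = 0
    rw [dif_neg (not_not_intro ((hasAdj_face_castSucc c hc p).2 hb')),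
        dif_neg (not_not_intro ((hasAdj_face_succ c hc p).2 hb))]
    have hbp : bP c r ((p:ℕ)-1) := by
      refine ⟨by omega, ?_⟩
      rw [show (p:ℕ)-1+2 = (p:ℕ)+1 by omega]
      exact hb'.2
    rw [gN, dif_pos hb, fN, if_neg (by omega), gN, dif_pos hbp,
        dbl_cls_eq c hr (p:ℕ) hb'.1 (by omega) hb'.2
          (bP_not_dbad c hr hc _ hbp) (bP_not_dbad c hr hc _ hb)]
    simp
  · -- hb only : LHS = s + 0, RHS = s - 0
    rw [dif_pos (by rw [hasAdj_face_castSucc c hc p]; exact hb'),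
        dif_neg (not_not_intro ((hasAdj_face_succ c hc p).2 hb)),
        dif_pos (bP_not_dbad c hr hc (p:ℕ) hb)]
    have hfN : fN r hr c hc (p:ℕ) = 0 := by
      rw [fN]
      split_ifs with h1
      · rfl
      · rw [gN, dif_neg]
        rintro ⟨h2, h3⟩
        exact hb' ⟨by omega, by rwa [show (p:ℕ)-1+2 = (p:ℕ)+1 by omega] at h3⟩
    rw [hfN, gN, dif_pos hb]
    simp
  · -- hb' only : LHS = 0 + (-s), RHS = 0 - s
    rw [dif_neg (not_not_intro ((hasAdj_face_castSucc c hc p).2 hb')),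
        dif_pos (by rw [hasAdj_face_succ c hc p]; exact hb),
        dif_pos (b'_not_dbad c hr hc (p:ℕ) hb'.1 hb'.2)]
    have hbp : bP c r ((p:ℕ)-1) := by
      refine ⟨by omega, ?_⟩
      rw [show (p:ℕ)-1+2 = (p:ℕ)+1 by omega]
      exact hb'.2
    rw [gN, dif_neg hb, fN, if_neg (by omega), gN, dif_pos hbp,
        dbl_cls_eq c hr (p:ℕ) hb'.1 (by omega) hb'.2
          (bP_not_dbad c hr hc _ hbp) (b'_not_dbad c hr hc (p:ℕ) hb'.1 hb'.2)]
    simp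
  · -- neither
    have hfN : fN r hr c hc (p:ℕ) = 0 := by
      rw [fN]
      split_ifs with h1
      · rfl
      · rw [gN, dif_neg]
        rintro ⟨h2, h3⟩
        exact hb' ⟨by omega, by rwa [show (p:ℕ)-1+2 = (p:ℕ)+1 by omega] at h3⟩
    by_cases hd : ¬ hasAdj r (dbl c (p:ℕ))
    · rw [dif_pos (by rw [hasAdj_face_castSucc c hc p]; exact hb'), dif_pos hd,
          dif_pos (by rw [hasAdj_face_succ c hc p]; exact hb), dif_pos hd,
          hfN, gN, dif_neg hb]
      simp
    · rw [dif_pos (by rw [hasAdj_face_castSucc c hc p]; exact hb'), dif_neg hd,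
          dif_pos (by rw [hasAdj_face_succ c hc p]; exact hb), dif_neg hd,
          hfN, gN, dif_neg hb]
      simp

end Aux5

section Aux6
variable {n j : ℕ} {r : Fin (n+1) → Fin (n+1) → Prop}
variable (c : Chain n (j+3))

lemma far_chain_eq (ℓ' : Fin (j+3)) (m' : Fin (j+2)) (ℓ : Fin (j+3)) (m : Fin (j+2))
    (h : (m:ℕ)+1 < (ℓ:ℕ)) (h1 : (ℓ':ℕ) = (m:ℕ)) (h2 : (m':ℕ)+1 = (ℓ:ℕ)) :
    face m' (face ℓ' c) = face m (face ℓ c) := by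
  apply chain_ext; intro u
  rw [face_apply, face_apply, face_apply, face_apply]
  apply c1_congr
  have hu := u.isLt
  have hm := m.isLt
  simp only [val_succAbove]
  split_ifs <;> omega

lemma mid_good (hc : ¬ hasAdj r c) (ℓ : Fin (j+3)) (m : Fin (j+2))
    (hne1 : (m:ℕ)+1 ≠ (ℓ:ℕ)) (hne2 : (m:ℕ) ≠ (ℓ:ℕ))
    (hdd : ¬ hasAdj r (face m (face ℓ c))) : ¬ hasAdj r (face ℓ c) := by
  rw [hasAdj_face_iff c hc]
  rintro ⟨h1, h2, hjun⟩
  apply hdd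
  have hmlt := m.isLt
  rcases Nat.lt_or_ge (m:ℕ) (ℓ:ℕ) with hm | hm
  · -- m + 1 < ℓ; witnesses u = ℓ-2, u' = ℓ-1
    have hu : (ℓ:ℕ)-2 < j+1 := by omega
    have hu' : (ℓ:ℕ)-1 < j+1 := by omega
    refine ⟨⟨(ℓ:ℕ)-2, hu⟩, ⟨(ℓ:ℕ)-1, hu'⟩, by simp only [Fin.val_mk]; omega, ?_⟩
    rw [face_apply, face_apply, face_apply, face_apply]
    rw [cv_eq c _ (by omega), cv_eq c _ (by omega)] at hjun
    have e1 : c.1 (ℓ.succAbove (m.succAbove ⟨(ℓ:ℕ)-2, hu⟩)) = c.1 ⟨(ℓ:ℕ)-1, by omega⟩ :=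
      c1_congr c (by simp only [val_succAbove, Fin.val_mk]; split_ifs <;> omega)
    have e2 : c.1 (ℓ.succAbove (m.succAbove ⟨(ℓ:ℕ)-1, hu'⟩)) = c.1 ⟨(ℓ:ℕ)+1, by omega⟩ :=
      c1_congr c (by simp only [val_succAbove, Fin.val_mk]; split_ifs <;> omega)
    rw [e1, e2]; exact hjun
  · -- ℓ < m; witnesses u = ℓ-1, u' = ℓ
    have hu : (ℓ:ℕ)-1 < j+1 := by omega
    have hu' : (ℓ:ℕ) < j+1 := by omega
    refine ⟨⟨(ℓ:ℕ)-1, hu⟩, ⟨(ℓ:ℕ), hu'⟩, by simp only [Fin.val_mk]; omega, ?_⟩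
    rw [face_apply, face_apply, face_apply, face_apply]
    rw [cv_eq c _ (by omega), cv_eq c _ (by omega)] at hjun
    have e1 : c.1 (ℓ.succAbove (m.succAbove ⟨(ℓ:ℕ)-1, hu⟩)) = c.1 ⟨(ℓ:ℕ)-1, by omega⟩ :=
      c1_congr c (by simp only [val_succAbove, Fin.val_mk]; split_ifs <;> omega)
    have e2 : c.1 (ℓ.succAbove (m.succAbove ⟨(ℓ:ℕ), hu'⟩)) = c.1 ⟨(ℓ:ℕ)+1, by omega⟩ :=
      c1_congr c (by simp only [val_succAbove, Fin.val_mk]; split_ifs <;> omega)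
    rw [e1, e2]; exact hjun

lemma far_cancel (hc : ¬ hasAdj r c) (ℓ ℓ' : Fin (j+3)) (m m' : Fin (j+2))
    (h : (m:ℕ)+1 < (ℓ:ℕ)) (h1 : (ℓ':ℕ) = (m:ℕ)) (h2 : (m':ℕ)+1 = (ℓ:ℕ)) :
    Tm r c ℓ m + Tm r c ℓ' m' = 0 := by
  have e := far_chain_eq c ℓ' m' ℓ m h h1 h2
  rw [Tm, Tm]
  simp only [e]
  by_cases hdd : ¬ hasAdj r (face m (face ℓ c))
  · rw [dif_pos (mid_good c hc ℓ m (by omega) (by omega) hdd), dif_pos hdd,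
        dif_pos (mid_good c hc ℓ' m' (by omega) (by omega) (by rw [e]; exact hdd)),
        dif_pos hdd, ← add_smul,
        show ((-1:ℂ)^(ℓ:ℕ) * (-1:ℂ)^(m:ℕ) + (-1:ℂ)^(ℓ':ℕ) * (-1:ℂ)^(m':ℕ)) = 0 by
          rw [h1, ← h2, pow_succ]; ring,
        zero_smul]
  · split_ifs <;> simp_all

end Aux6

set_option maxHeartbeats 1000000 in
/-- For an equivalence `n`-simplex, `D_{k-1} ∘ D_k = 0` for `2 ≤ k ≤ n` (below, `k = j + 2`),
and `D_0 ∘ D_1 = 0`; hence the `ℂ[C_k]` form a chain complex. -/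
theorem stmt5 (n : ℕ) (r : Fin (n + 1) → Fin (n + 1) → Prop) (hr : Equivalence r)
    (hadj : ∀ i j : Fin (n + 1), r i j → (i : ℕ) ≠ (j : ℕ) + 1 ∧ (j : ℕ) ≠ (i : ℕ) + 1)
    (D : ∀ k : ℕ, ((CSet n r (k + 1)) →₀ ℂ) →ₗ[ℂ] ((CSet n r k) →₀ ℂ))
    (hD : IsD n r D)
    (D0 : ((CSet n r 0) →₀ ℂ) →ₗ[ℂ] ℂ) (hD0 : IsD0 n r D0) :
    (∀ j : ℕ, j + 2 ≤ n → (D j).comp (D (j + 1)) = 0) ∧ D0.comp (D 0) = 0 := by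
  constructor
  · intro j _
    refine Finsupp.lhom_ext fun q b => ?_
    obtain ⟨⟨c, hcg⟩, rfl⟩ := Quot.exists_rep q
    show (D j).comp (D (j+1)) (Finsupp.single (cls r c hcg) b)
        = (0 : ((CSet n r (j+2)) →₀ ℂ) →ₗ[ℂ] ((CSet n r j) →₀ ℂ)) (Finsupp.single (cls r c hcg) b)
    have key : (D j) ((D (j+1)) (Finsupp.single (cls r c hcg) 1)) = 0 := by
      rw [hD (j+1) c hcg, map_sum]
      have step : ∀ ℓ : Fin (j+3),
          (D j) (if h : ¬ hasAdj r (face ℓ c) then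
              ((-1:ℂ)^(ℓ:ℕ)) • Finsupp.single (cls r (face ℓ c) h) 1 else 0)
            = ∑ m : Fin (j+2), Tm r c ℓ m := by
        intro ℓ
        by_cases hℓ : ¬ hasAdj r (face ℓ c)
        · rw [dif_pos hℓ, map_smul, hD j (face ℓ c) hℓ, Finset.smul_sum]
          refine Finset.sum_congr rfl fun m _ => ?_
          rw [Tm, dif_pos hℓ]
          by_cases h2 : ¬ hasAdj r (face m (face ℓ c))
          · rw [dif_pos h2, dif_pos h2, smul_smul]
          · rw [dif_neg h2, dif_neg h2, smul_zero]
        · rw [dif_neg hℓ, map_zero]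
          symm
          refine Finset.sum_eq_zero fun m _ => ?_
          rw [Tm, dif_neg hℓ]
      rw [Finset.sum_congr rfl fun ℓ _ => step ℓ, ← Finset.sum_product']
      rw [← Finset.sum_filter_add_sum_filter_not (Finset.univ ×ˢ Finset.univ)
            (fun x : Fin (j+3) × Fin (j+2) => ((x.2:ℕ)+1 ≠ (x.1:ℕ) ∧ (x.2:ℕ) ≠ (x.1:ℕ)))]
      have far : (∑ x ∈ Finset.filter
            (fun x : Fin (j+3) × Fin (j+2) => ((x.2:ℕ)+1 ≠ (x.1:ℕ) ∧ (x.2:ℕ) ≠ (x.1:ℕ)))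
            (Finset.univ ×ˢ Finset.univ), Tm r c x.1 x.2) = 0 := by
        refine Finset.sum_involution
          (fun x hx =>
            if hlt : (x.2:ℕ) < (x.1:ℕ) then
              (⟨(x.2:ℕ), by have := x.2.isLt; omega⟩, ⟨(x.1:ℕ)-1, by have := x.1.isLt; omega⟩)
            else
              (⟨(x.2:ℕ)+1, by have := x.2.isLt; omega⟩,
               ⟨(x.1:ℕ), by
                  have h' := (Finset.mem_filter.1 hx).2
                  have := x.2.isLt; omega⟩))
          ?_ ?_ ?_ ?_
        · rintro ⟨ℓ, m⟩ hx
          have h' := (Finset.mem_filter.1 hx).2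
          simp only at h'
          have hm2 := m.isLt
          have hl3 := ℓ.isLt
          dsimp only
          by_cases hlt : (m:ℕ) < (ℓ:ℕ)
          · rw [dif_pos hlt]
            exact far_cancel c hcg ℓ ⟨(m:ℕ), by omega⟩ m ⟨(ℓ:ℕ)-1, by omega⟩
              (by omega) (by simp) (by simp; omega)
          · rw [dif_neg hlt, add_comm]
            exact far_cancel c hcg ⟨(m:ℕ)+1, by omega⟩ ℓ ⟨(ℓ:ℕ), by omega⟩ m
              (by simp; omega) (by simp) (by simp)
        · rintro ⟨ℓ, m⟩ hx -
          have h' := (Finset.mem_filter.1 hx).2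
          simp only at h'
          have hm2 := m.isLt
          have hl3 := ℓ.isLt
          dsimp only
          by_cases hlt : (m:ℕ) < (ℓ:ℕ)
          · rw [dif_pos hlt]
            simp only [ne_eq, Prod.mk.injEq, Fin.ext_iff, Fin.val_mk, not_and]
            intro h1 h2
            omega
          · rw [dif_neg hlt]
            simp only [ne_eq, Prod.mk.injEq, Fin.ext_iff, Fin.val_mk, not_and]
            intro h1 h2
            omega
        · rintro ⟨ℓ, m⟩ hx
          have h' := (Finset.mem_filter.1 hx).2
          simp only at h'
          have hm2 := m.isLt
          have hl3 := ℓ.isLt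
          dsimp only
          by_cases hlt : (m:ℕ) < (ℓ:ℕ)
          · rw [dif_pos hlt]
            simp only [Finset.mem_filter, Finset.mem_product, Finset.mem_univ, true_and,
              ne_eq, Fin.val_mk]
            omega
          · rw [dif_neg hlt]
            simp only [Finset.mem_filter, Finset.mem_product, Finset.mem_univ, true_and,
              ne_eq, Fin.val_mk]
            omega
        · rintro ⟨ℓ, m⟩ hx
          have h' := (Finset.mem_filter.1 hx).2
          simp only at h'
          have hm2 := m.isLt
          have hl3 := ℓ.isLt
          dsimp only
          by_cases hlt : (m:ℕ) < (ℓ:ℕ)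
          · simp only [dif_pos hlt]
            try dsimp only
            split_ifs with h2
            · exfalso
              try simp at h2
              omega
            · simp [Prod.ext_iff, Fin.ext_iff]
              try omega
          · simp only [dif_neg hlt]
            try dsimp only
            split_ifs with h2
            · simp [Prod.ext_iff, Fin.ext_iff]
              try omega
            · exfalso
              apply h2
              try simp
              omega
      have near : (∑ x ∈ Finset.filter
            (fun x : Fin (j+3) × Fin (j+2) => ¬((x.2:ℕ)+1 ≠ (x.1:ℕ) ∧ (x.2:ℕ) ≠ (x.1:ℕ)))
            (Finset.univ ×ˢ Finset.univ), Tm r c x.1 x.2) = 0 := by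
        rw [Finset.sum_filter, Finset.sum_product_right]
        have inner : ∀ m : Fin (j+2),
            (∑ ℓ : Fin (j+3),
              if ¬((m:ℕ)+1 ≠ (ℓ:ℕ) ∧ (m:ℕ) ≠ (ℓ:ℕ)) then Tm r c ℓ m else 0)
              = Tm r c m.castSucc m + Tm r c m.succ m := by
          intro m
          have hstep : ∀ ℓ : Fin (j+3),
              (if ¬((m:ℕ)+1 ≠ (ℓ:ℕ) ∧ (m:ℕ) ≠ (ℓ:ℕ)) then Tm r c ℓ m else 0)
              = (if ℓ ∈ ({m.castSucc, m.succ} : Finset (Fin (j+3))) then Tm r c ℓ m else 0) := by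
            intro ℓ
            refine if_congr ?_ rfl rfl
            simp only [Finset.mem_insert, Finset.mem_singleton, Fin.ext_iff,
              Fin.coe_castSucc, Fin.val_succ]
            omega
          rw [Finset.sum_congr rfl fun ℓ _ => hstep ℓ, Finset.sum_ite_mem,
            Finset.univ_inter, Finset.sum_pair (by simp [Fin.ext_iff])]
        rw [Finset.sum_congr rfl fun m _ => inner m]
        have nt : ∀ m : Fin (j+2), Tm r c m.castSucc m + Tm r c m.succ m
            = fN r hr c hcg ((m:ℕ)+1) - fN r hr c hcg (m:ℕ) := by
          intro m
          rw [near_term hr c hcg m, fN_succ]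
        rw [Finset.sum_congr rfl fun m _ => nt m,
          Fin.sum_univ_eq_sum_range (fun P => fN r hr c hcg (P+1) - fN r hr c hcg P) (j+2),
          Finset.sum_range_sub (fN r hr c hcg)]
        rw [show fN r hr c hcg (j+2) = gN r hr c hcg (j+1) from fN_succ hr c hcg (j+1),
          gN_last hr c hcg (j+1) (by omega)]
        simp [fN]
      rw [far, near, add_zero]
    rw [LinearMap.comp_apply, LinearMap.zero_apply,
      show Finsupp.single (cls r c hcg) b = b • Finsupp.single (cls r c hcg) (1:ℂ) by
        rw [Finsupp.smul_single, smul_eq_mul, mul_one],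
      map_smul, map_smul, key, smul_zero]
  · refine Finsupp.lhom_ext fun q b => ?_
    obtain ⟨⟨c, hcg⟩, rfl⟩ := Quot.exists_rep q
    show D0.comp (D 0) (Finsupp.single (cls r c hcg) b)
        = (0 : ((CSet n r 1) →₀ ℂ) →ₗ[ℂ] ℂ) (Finsupp.single (cls r c hcg) b)
    have h1 : ∀ d : Chain n 1, ¬ hasAdj r d := by
      rintro d ⟨i, i', hii', -⟩
      have := i.isLt; have := i'.isLt; omega
    have key : D0 ((D 0) (Finsupp.single (cls r c hcg) 1)) = 0 := by
      rw [hD 0 c hcg, map_sum, Fin.sum_univ_two, dif_pos (h1 _), dif_pos (h1 _),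
        map_smul, map_smul, hD0, hD0]
      norm_num
    rw [LinearMap.comp_apply, LinearMap.zero_apply,
      show Finsupp.single (cls r c hcg) b = b • Finsupp.single (cls r c hcg) (1:ℂ) by
        rw [Finsupp.smul_single, smul_eq_mul, mul_one],
      map_smul, map_smul, key, smul_zero]
end

section
/- For an equivalence n-simplex {C_k}, define ∂_k : ℂ[A_k] → ℂ[A_{k−1}] by ∂_k(c) = Σ_{ℓ=0}^k (−1)^ℓ d_ℓ(c) for k ≥ 1 and let ∂_0 : ℂ[A_0] → ℂ be the augmentation; define p_k : ℂ[A_k] → ℂ[C_k] by p_k(c) = [c] if c ∉ B_k and p_k(c) = 0 if c ∈ B_k, and let p_{−1} = id_ℂ. Then p_{k−1} ∘ ∂_k = D_k ∘ p_k for every 1 ≤ k ≤ n, and ∂_0 = D_0 ∘ p_0; moreover each p_k is surjective. -/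
open Finset
open scoped Classical

/-- `∂` is the family of boundary maps on `ℂ[A_k]`: `∂ k` is the statement's
`∂_{k+1} : ℂ[A_{k+1}] → ℂ[A_k]`, the full alternating sum of faces. -/
def IsDel (n : ℕ)
    (del : ∀ k : ℕ, ((Chain n (k + 2)) →₀ ℂ) →ₗ[ℂ] ((Chain n (k + 1)) →₀ ℂ)) : Prop :=
  ∀ (k : ℕ) (c : Chain n (k + 2)),
    del k (Finsupp.single c 1) =
      ∑ ℓ : Fin (k + 2), ((-1 : ℂ) ^ (ℓ : ℕ)) • Finsupp.single (face ℓ c) 1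

/-- `∂_0 : ℂ[A_0] → ℂ` is the augmentation. -/
def IsDel0 (n : ℕ) (del0 : ((Chain n 1) →₀ ℂ) →ₗ[ℂ] ℂ) : Prop :=
  ∀ c : Chain n 1, del0 (Finsupp.single c 1) = 1

/-- `p` is the family of projections `p_k : ℂ[A_k] → ℂ[C_k]`, sending `c` to `[c]` if
`c ∉ B_k` and to `0` if `c ∈ B_k`. -/
def IsP (n : ℕ) (r : Fin (n + 1) → Fin (n + 1) → Prop)
    (p : ∀ k : ℕ, ((Chain n (k + 1)) →₀ ℂ) →ₗ[ℂ] ((CSet n r k) →₀ ℂ)) : Prop :=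
  ∀ (k : ℕ) (c : Chain n (k + 1)),
    p k (Finsupp.single c 1) =
      if h : ¬ hasAdj r c then Finsupp.single (cls r c h) 1 else 0


lemma succAbove_val {m : ℕ} (ℓ : Fin (m + 1)) (i : Fin m) :
    ((ℓ.succAbove i : Fin (m + 1)) : ℕ) = if (i : ℕ) < (ℓ : ℕ) then (i : ℕ) else (i : ℕ) + 1 := by
  split_ifs with h
  · rw [Fin.succAbove_of_castSucc_lt _ _ (by simpa [Fin.lt_def] using h)]; rfl
  · rw [Fin.succAbove_of_le_castSucc _ _ (by simpa [Fin.le_def] using Nat.le_of_not_lt h)]; rfl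

lemma hasAdj_of_approx {n : ℕ} {r : Fin (n + 1) → Fin (n + 1) → Prop} (hr : Equivalence r)
    {m : ℕ} {c c' : Chain n m} (hcc : cApprox r c c') (h : hasAdj r c) : hasAdj r c' := by
  obtain ⟨i, j, hij, hrij⟩ := h
  exact ⟨i, j, hij, hr.trans (hr.trans (hr.symm (hcc i)) hrij) (hcc j)⟩

lemma hasAdj_face_of_ne {n j : ℕ} {r : Fin (n + 1) → Fin (n + 1) → Prop}
    (c : Chain n (j + 2)) (m : Fin (j + 1))
    (hm : r (c.1 m.castSucc) (c.1 m.succ)) (ℓ : Fin (j + 2))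
    (h1 : ℓ ≠ m.castSucc) (h2 : ℓ ≠ m.succ) : hasAdj r (face ℓ c) := by
  have hv1 : (ℓ : ℕ) ≠ (m : ℕ) := fun h => h1 (Fin.ext (by simpa using h))
  have hv2 : (ℓ : ℕ) ≠ (m : ℕ) + 1 := fun h => h2 (Fin.ext (by simpa using h))
  have hℓ : (ℓ : ℕ) < j + 2 := ℓ.isLt
  rcases Nat.lt_or_ge (ℓ : ℕ) (m : ℕ) with h | h
  · -- ℓ < m : positions m-1, m in the face give c_m, c_{m+1}
    refine ⟨⟨(m : ℕ) - 1, by omega⟩, ⟨(m : ℕ), m.isLt⟩, by simp; omega, ?_⟩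
    have e1 : ℓ.succAbove ⟨(m : ℕ) - 1, by omega⟩ = m.castSucc := by
      apply Fin.ext; rw [succAbove_val]; simp only [Fin.coe_castSucc, Fin.val_succ]; split_ifs <;> omega
    have e2 : ℓ.succAbove ⟨(m : ℕ), m.isLt⟩ = m.succ := by
      apply Fin.ext; rw [succAbove_val]; simp only [Fin.coe_castSucc, Fin.val_succ]; split_ifs <;> omega
    show r (c.1 (ℓ.succAbove _)) (c.1 (ℓ.succAbove _))
    rw [e1, e2]; exact hm
  · have h' : (m : ℕ) + 1 < (ℓ : ℕ) := by omega
    refine ⟨⟨(m : ℕ), by omega⟩, ⟨(m : ℕ) + 1, by omega⟩, by simp, ?_⟩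
    have e1 : ℓ.succAbove ⟨(m : ℕ), by omega⟩ = m.castSucc := by
      apply Fin.ext; rw [succAbove_val]; simp only [Fin.coe_castSucc, Fin.val_succ]; split_ifs <;> omega
    have e2 : ℓ.succAbove ⟨(m : ℕ) + 1, by omega⟩ = m.succ := by
      apply Fin.ext; rw [succAbove_val]; simp only [Fin.coe_castSucc, Fin.val_succ]; split_ifs <;> omega
    show r (c.1 (ℓ.succAbove _)) (c.1 (ℓ.succAbove _))
    rw [e1, e2]; exact hm

lemma cApprox_face {n j : ℕ} {r : Fin (n + 1) → Fin (n + 1) → Prop} (hr : Equivalence r)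
    (c : Chain n (j + 2)) (m : Fin (j + 1))
    (hm : r (c.1 m.castSucc) (c.1 m.succ)) :
    cApprox r (face m.castSucc c) (face m.succ c) := by
  intro i
  show r (c.1 ((m.castSucc).succAbove i)) (c.1 ((m.succ).succAbove i))
  rcases lt_trichotomy (i : ℕ) (m : ℕ) with h | h | h
  · have e : (m.castSucc).succAbove i = (m.succ).succAbove i := by
      apply Fin.ext; rw [succAbove_val, succAbove_val]; simp only [Fin.coe_castSucc, Fin.val_succ]; split_ifs <;> omega
    rw [e]; exact hr.refl _
  · have e1 : (m.castSucc).succAbove i = m.succ := by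
      apply Fin.ext; rw [succAbove_val]; simp only [Fin.coe_castSucc, Fin.val_succ]; split_ifs <;> omega
    have e2 : (m.succ).succAbove i = m.castSucc := by
      apply Fin.ext; rw [succAbove_val]; simp only [Fin.coe_castSucc, Fin.val_succ]; split_ifs <;> omega
    rw [e1, e2]; exact hr.symm hm
  · have e : (m.castSucc).succAbove i = (m.succ).succAbove i := by
      apply Fin.ext; rw [succAbove_val, succAbove_val]; simp only [Fin.coe_castSucc, Fin.val_succ]; split_ifs <;> omega
    rw [e]; exact hr.refl _

/-- The projections `p_k` form a surjective chain map from `(ℂ[A_k], ∂)` to `(ℂ[C_k], D)`: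
`p_{k-1} ∘ ∂_k = D_k ∘ p_k` for `1 ≤ k ≤ n` (below, `k = j + 1`, with `p_{-1} = id_ℂ`),
`∂_0 = D_0 ∘ p_0`, and each `p_k` is surjective. -/
theorem stmt6 (n : ℕ) (r : Fin (n + 1) → Fin (n + 1) → Prop) (hr : Equivalence r)
    (hadj : ∀ i j : Fin (n + 1), r i j → (i : ℕ) ≠ (j : ℕ) + 1 ∧ (j : ℕ) ≠ (i : ℕ) + 1)
    (D : ∀ k : ℕ, ((CSet n r (k + 1)) →₀ ℂ) →ₗ[ℂ] ((CSet n r k) →₀ ℂ))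
    (hD : IsD n r D)
    (D0 : ((CSet n r 0) →₀ ℂ) →ₗ[ℂ] ℂ) (hD0 : IsD0 n r D0)
    (del : ∀ k : ℕ, ((Chain n (k + 2)) →₀ ℂ) →ₗ[ℂ] ((Chain n (k + 1)) →₀ ℂ))
    (hdel : IsDel n del)
    (del0 : ((Chain n 1) →₀ ℂ) →ₗ[ℂ] ℂ) (hdel0 : IsDel0 n del0)
    (p : ∀ k : ℕ, ((Chain n (k + 1)) →₀ ℂ) →ₗ[ℂ] ((CSet n r k) →₀ ℂ)) (hp : IsP n r p) :
    (∀ j : ℕ, j + 1 ≤ n → (p j).comp (del j) = (D j).comp (p (j + 1))) ∧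
    del0 = D0.comp (p 0) ∧
    ∀ k : ℕ, Function.Surjective ⇑(p k) := by

  refine ⟨?_, ?_, ?_⟩
  · -- chain map condition
    intro j _
    apply Finsupp.lhom_ext
    intro c b
    have hb : (Finsupp.single c b) = b • Finsupp.single c 1 := by
      rw [Finsupp.smul_single, smul_eq_mul, mul_one]
    rw [LinearMap.comp_apply, LinearMap.comp_apply, hb, map_smul, map_smul, map_smul, map_smul]
    congr 1
    rw [hdel j c, map_sum, hp (j + 1) c]
    simp_rw [map_smul, hp j]
    by_cases hc : hasAdj r c
    · rw [dif_neg (not_not_intro hc), map_zero]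
      obtain ⟨i, jj, hij, hrij⟩ := hc
      have hilt : (i : ℕ) < j + 1 := by have := jj.isLt; omega
      set m : Fin (j + 1) := ⟨(i : ℕ), hilt⟩ with hmdef
      have ei : m.castSucc = i := Fin.ext rfl
      have ej : m.succ = jj := Fin.ext (by simp [hmdef]; omega)
      have hm : r (c.1 m.castSucc) (c.1 m.succ) := by rw [ei, ej]; exact hrij
      have hne : m.castSucc ≠ m.succ := by
        intro h
        have := congrArg Fin.val h
        simp at this
      have hzero : ∀ ℓ ∈ Finset.univ, ℓ ∉ ({m.castSucc, m.succ} : Finset (Fin (j + 2))) →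
          ((-1 : ℂ) ^ (ℓ : ℕ)) • (if h : ¬ hasAdj r (face ℓ c) then
            Finsupp.single (cls r (face ℓ c) h) (1 : ℂ) else 0) = 0 := by
        intro ℓ _ hℓ
        simp only [Finset.mem_insert, Finset.mem_singleton, not_or] at hℓ
        rw [dif_neg (not_not_intro (hasAdj_face_of_ne c m hm ℓ hℓ.1 hℓ.2)), smul_zero]
      rw [← Finset.sum_subset (Finset.subset_univ {m.castSucc, m.succ}) hzero,
        Finset.sum_pair hne]
      by_cases hface : hasAdj r (face m.castSucc c)
      · have hface' : hasAdj r (face m.succ c) :=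
          hasAdj_of_approx hr (cApprox_face hr c m hm) hface
        rw [dif_neg (not_not_intro hface), dif_neg (not_not_intro hface'), smul_zero, smul_zero,
          add_zero]
      · have hface' : ¬ hasAdj r (face m.succ c) := fun h =>
          hface (hasAdj_of_approx hr (fun i => hr.symm (cApprox_face hr c m hm i)) h)
        rw [dif_pos hface, dif_pos hface']
        have hcls : cls r (face m.castSucc c) hface = cls r (face m.succ c) hface' :=
          Quot.sound (cApprox_face hr c m hm)
        rw [hcls]
        have hv1 : ((m.castSucc : Fin (j + 2)) : ℕ) = (m : ℕ) := rfl
        have hv2 : ((m.succ : Fin (j + 2)) : ℕ) = (m : ℕ) + 1 := rfl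
        rw [hv1, hv2, pow_succ]
        simp [← add_smul]
    · rw [dif_pos hc, hD j c hc]
      apply Finset.sum_congr rfl
      intro ℓ _
      by_cases hface : hasAdj r (face ℓ c)
      · rw [dif_neg (not_not_intro hface), dif_neg (not_not_intro hface), smul_zero]
      · rw [dif_pos hface, dif_pos hface]
  · -- augmentation
    apply Finsupp.lhom_ext
    intro c b
    have hb : (Finsupp.single c b) = b • Finsupp.single c 1 := by
      rw [Finsupp.smul_single, smul_eq_mul, mul_one]
    rw [hb, map_smul, map_smul]
    congr 1
    have hc : ¬ hasAdj r c := by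
      rintro ⟨i, j, hij, -⟩
      have := i.isLt; have := j.isLt; omega
    rw [hdel0 c, LinearMap.comp_apply, hp 0 c, dif_pos hc, hD0]
  · -- surjectivity
    intro k f
    induction f using Finsupp.induction_linear with
    | zero => exact ⟨0, map_zero _⟩
    | add f g hf hg =>
      obtain ⟨x, hx⟩ := hf; obtain ⟨y, hy⟩ := hg
      exact ⟨x + y, by rw [map_add, hx, hy]⟩
    | single q b =>
      obtain ⟨⟨c, hc⟩, rfl⟩ := Quot.exists_rep q
      refine ⟨Finsupp.single c b, ?_⟩
      have hb : (Finsupp.single c b) = b • Finsupp.single c 1 := by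
        rw [Finsupp.smul_single, smul_eq_mul, mul_one]
      rw [hb, map_smul, hp k c, dif_pos hc, Finsupp.smul_single, smul_eq_mul, mul_one]
      rfl
end

section
/- For an equivalence n-simplex {C_k}, the maps h_k : ℂ[C_k] → ℂ[C_{k+1}] given on basis elements by h_k([(i_0,…,i_k)]) = [(0,i_0,…,i_k)] if 0 ≁ i_0 and h_k([(i_0,…,i_k)]) = 0 if 0 ∼ i_0, together with h_{−1} : ℂ → ℂ[C_0], h_{−1}(1) = [(0)], are well-defined and form a contracting homotopy: D_0 ∘ h_{−1} = id_ℂ, and h_{k−1} ∘ D_k + D_{k+1} ∘ h_k = id_{ℂ[C_k]} for every 0 ≤ k ≤ n (where D_{n+1} = 0). -/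
open Finset
open scoped Classical

/-- The singleton tuple `(0)`, an element of `A_0`. -/
def zeroChain (n : ℕ) : Chain n 1 :=
  ⟨fun _ => 0, fun a b hab =>
    absurd (Fin.lt_def.mp hab) (by have := a.isLt; have := b.isLt; omega)⟩

theorem zeroChain_not_hasAdj {n : ℕ} (r : Fin (n + 1) → Fin (n + 1) → Prop) :
    ¬ hasAdj r (zeroChain n) := by
  rintro ⟨i, j, hij, -⟩
  have := j.isLt
  omega

/-- `h` is the family of contracting homotopies `h_k : ℂ[C_k] → ℂ[C_{k+1}]`, given on basis
elements by `h_k([(i_0,…,i_k)]) = [(0, i_0,…,i_k)]` if `0 ≁ i_0`, and `0` if `0 ∼ i_0`. -/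
def IsH (n : ℕ) (r : Fin (n + 1) → Fin (n + 1) → Prop)
    (h : ∀ k : ℕ, ((CSet n r k) →₀ ℂ) →ₗ[ℂ] ((CSet n r (k + 1)) →₀ ℂ)) : Prop :=
  ∀ (k : ℕ) (c : Chain n (k + 1)) (hc : ¬ hasAdj r c),
    (r 0 (c.1 0) → h k (Finsupp.single (cls r c hc) 1) = 0) ∧
    (¬ r 0 (c.1 0) →
      ∃ (hm : StrictMono (Fin.cons (0 : Fin (n + 1)) c.1))
        (hB : ¬ hasAdj r (⟨Fin.cons (0 : Fin (n + 1)) c.1, hm⟩ : Chain n (k + 2))),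
        h k (Finsupp.single (cls r c hc) 1) =
          Finsupp.single (cls r ⟨Fin.cons (0 : Fin (n + 1)) c.1, hm⟩ hB) 1)

/-- `h₋₁ : ℂ → ℂ[C_0]` sends `1` to the class of the singleton tuple `(0)`. -/
def IsHneg (n : ℕ) (r : Fin (n + 1) → Fin (n + 1) → Prop)
    (hneg : ℂ →ₗ[ℂ] ((CSet n r 0) →₀ ℂ)) : Prop :=
  hneg 1 = Finsupp.single (cls r (zeroChain n) (zeroChain_not_hasAdj r)) 1

section MyAux
variable {n : ℕ} {r : Fin (n + 1) → Fin (n + 1) → Prop}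

lemma not_hasAdj_one (c : Chain n 1) : ¬ hasAdj r c := by
  rintro ⟨i, j, hij, -⟩
  have := j.isLt
  omega

lemma cons_strictMono {k : ℕ} (c : Chain n (k + 1)) (h0 : c.1 0 ≠ 0) :
    StrictMono (Fin.cons (0 : Fin (n + 1)) c.1) := by
  rw [Fin.strictMono_iff_lt_succ]
  intro i
  induction i using Fin.cases with
  | zero =>
    simpa using Fin.pos_of_ne_zero h0
  | succ i =>
    rw [← Fin.succ_castSucc, Fin.cons_succ, Fin.cons_succ]
    exact c.2 (Fin.castSucc_lt_succ (i := i))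

/-- CHeck hasAdj on cons -/
lemma hasAdj_cons_iff {k : ℕ} (c : Chain n (k + 1)) (d : Chain n (k + 2))
    (hd : d.1 = Fin.cons (0 : Fin (n + 1)) c.1) :
    hasAdj r d ↔ r 0 (c.1 0) ∨ hasAdj r c := by
  simp only [hasAdj, hd]
  constructor
  · rintro ⟨i, j, hij, hrij⟩
    have hj0 : j ≠ 0 := by
      intro hj; rw [hj] at hij; simp at hij
    obtain ⟨j', rfl⟩ := Fin.exists_succ_eq.mpr hj0
    induction i using Fin.cases with
    | zero =>
      have : j' = 0 := by
        have := hij; simp [Fin.val_succ] at this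
        exact Fin.ext (by simp [this.symm])
      subst this
      left
      simpa [Fin.cons_succ] using hrij
    | succ i' =>
      right
      refine ⟨i', j', ?_, ?_⟩
      · simpa [Fin.val_succ] using hij
      · simpa [Fin.cons_succ] using hrij
  · rintro (h | ⟨i, j, hij, hrij⟩)
    · exact ⟨0, (0 : Fin (k + 1)).succ, by simp, by simpa [Fin.cons_succ] using h⟩
    · exact ⟨i.succ, j.succ, by simp [Fin.val_succ]; omega, by simpa [Fin.cons_succ] using hrij⟩


/-- The chain `(0, c)`. -/
def consChain {k : ℕ} (c : Chain n (k + 1)) (h0 : c.1 0 ≠ 0) : Chain n (k + 2) :=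
  ⟨Fin.cons (0 : Fin (n + 1)) c.1, cons_strictMono c h0⟩

lemma ne_zero_of_not_r (hr : Equivalence r) {k : ℕ} (c : Chain n (k + 1))
    (h0 : ¬ r 0 (c.1 0)) : c.1 0 ≠ 0 := fun he => h0 (by rw [he]; exact hr.refl 0)

lemma consChain_not_hasAdj {k : ℕ} (c : Chain n (k + 1)) (h0 : c.1 0 ≠ 0)
    (hc : ¬ hasAdj r c) (h0r : ¬ r 0 (c.1 0)) : ¬ hasAdj r (consChain c h0) := by
  rw [hasAdj_cons_iff c (consChain c h0) rfl]
  rintro (h | h)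
  · exact h0r h
  · exact hc h

lemma face_zero_cons {k : ℕ} (c : Chain n (k + 1)) (h0 : c.1 0 ≠ 0) :
    face 0 (consChain c h0) = c := by
  apply Subtype.ext
  funext i
  simp [face, consChain]

lemma face_succ_cons {k : ℕ} (c : Chain n (k + 1)) (h0 : c.1 0 ≠ 0) (ℓ : Fin (k + 1)) :
    (face ℓ.succ (consChain c h0)).1 = Fin.cons (0 : Fin (n + 1)) (face ℓ c).1 := by
  funext i
  induction i using Fin.cases with
  | zero => simp [face, consChain, Fin.succ_succAbove_zero]
  | succ i => simp [face, consChain, Fin.succ_succAbove_succ, Fin.removeNth]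

lemma face_zero_not_hasAdj {k : ℕ} (c : Chain n (k + 2)) (hc : ¬ hasAdj r c) :
    ¬ hasAdj r (face 0 c) := by
  rintro ⟨i, j, hij, hrij⟩
  refine hc ⟨i.succ, j.succ, by simp [Fin.val_succ]; omega, ?_⟩
  simpa [face, Fin.succAbove_zero] using hrij

/-- Class of `(0, tail c)` equals class of `c` when `0 ∼ c₀`. -/
lemma cls_cons_face_zero (hr : Equivalence r) {k : ℕ} (c : Chain n (k + 2))
    (hc : ¬ hasAdj r c) (h0 : (face 0 c).1 0 ≠ 0) (hB : ¬ hasAdj r (consChain (face 0 c) h0))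
    (hr0 : r 0 (c.1 0)) :
    cls r (consChain (face 0 c) h0) hB = cls r c hc := by
  apply Quot.sound
  intro i
  induction i using Fin.cases with
  | zero => simpa [consChain] using hr0
  | succ i =>
    simp only [consChain, face, Fin.cons_succ, Function.comp_apply, Fin.succAbove_zero]
    exact hr.refl _


variable (r)

/-- underlying function of the homotopy on classes -/
noncomputable def hFun (hr : Equivalence r) (k : ℕ) :
    {c : Chain n (k + 1) // ¬ hasAdj r c} → ((CSet n r (k + 1)) →₀ ℂ) :=
  fun c =>
    if h0 : r 0 (c.1.1 0) then 0
    else Finsupp.single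
      (cls r (consChain c.1 (ne_zero_of_not_r hr c.1 h0))
        (consChain_not_hasAdj c.1 _ c.2 h0)) 1

lemma hFun_wellDef (hr : Equivalence r) (k : ℕ)
    (a b : {c : Chain n (k + 1) // ¬ hasAdj r c}) (hab : cApprox r a.1 b.1) :
    hFun r hr k a = hFun r hr k b := by
  have hiff : r 0 (a.1.1 0) ↔ r 0 (b.1.1 0) :=
    ⟨fun h => hr.trans h (hab 0), fun h => hr.trans h (hr.symm (hab 0))⟩
  unfold hFun
  by_cases h0 : r 0 (a.1.1 0)
  · rw [dif_pos h0, dif_pos (hiff.mp h0)]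
  · rw [dif_neg h0, dif_neg (fun h => h0 (hiff.mpr h))]
    congr 1
    apply Quot.sound
    intro i
    induction i using Fin.cases with
    | zero => simpa [consChain] using hr.refl 0
    | succ i => simpa [consChain] using hab i

/-- the homotopy -/
noncomputable def hMap (hr : Equivalence r) (k : ℕ) :
    ((CSet n r k) →₀ ℂ) →ₗ[ℂ] ((CSet n r (k + 1)) →₀ ℂ) :=
  Finsupp.lift _ ℂ _ (Quot.lift (hFun r hr k) (hFun_wellDef r hr k))

lemma hMap_single (hr : Equivalence r) (k : ℕ) (c : Chain n (k + 1)) (hc : ¬ hasAdj r c) :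
    hMap r hr k (Finsupp.single (cls r c hc) 1) = hFun r hr k ⟨c, hc⟩ := by
  unfold hMap
  erw [Finsupp.lift_apply, Finsupp.sum_single_index] <;> simp [cls]

lemma hMap_single_pos (hr : Equivalence r) (k : ℕ) (c : Chain n (k + 1)) (hc : ¬ hasAdj r c)
    (h0 : r 0 (c.1 0)) :
    hMap r hr k (Finsupp.single (cls r c hc) 1) = 0 := by
  rw [hMap_single]; simp [hFun, h0]

lemma hMap_single_neg (hr : Equivalence r) (k : ℕ) (c : Chain n (k + 1)) (hc : ¬ hasAdj r c)
    (h0 : ¬ r 0 (c.1 0)) (hne : c.1 0 ≠ 0) (hB : ¬ hasAdj r (consChain c hne)) :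
    hMap r hr k (Finsupp.single (cls r c hc) 1) =
      Finsupp.single (cls r (consChain c hne) hB) 1 := by
  rw [hMap_single]; simp [hFun, h0]


lemma cls_eq_of_eq {k : ℕ} {c d : Chain n (k + 1)} (hcd : c = d) (hc : ¬ hasAdj r c)
    (hd : ¬ hasAdj r d) : cls r c hc = cls r d hd := by subst hcd; rfl

lemma lhom_ext1 {M : Type*} [AddCommMonoid M] [Module ℂ M] {α : Type*}
    {f g : (α →₀ ℂ) →ₗ[ℂ] M} (h : ∀ a, f (Finsupp.single a 1) = g (Finsupp.single a 1)) :
    f = g := by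
  refine Finsupp.lhom_ext fun a b => ?_
  have hb : Finsupp.single a b = b • Finsupp.single a 1 := by simp
  rw [hb, map_smul, map_smul, h a]

/-- IsD signature locally -/
lemma key_general (hr : Equivalence r)
    (D : ∀ k : ℕ, ((CSet n r (k + 1)) →₀ ℂ) →ₗ[ℂ] ((CSet n r k) →₀ ℂ))
    (hD : ∀ (k : ℕ) (c : Chain n (k + 2)) (hc : ¬ hasAdj r c),
      D k (Finsupp.single (cls r c hc) 1) =
        ∑ ℓ : Fin (k + 2),
          if h : ¬ hasAdj r (face ℓ c) then
            ((-1 : ℂ) ^ (ℓ : ℕ)) • Finsupp.single (cls r (face ℓ c) h) 1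
          else 0)
    (k : ℕ) (c : Chain n (k + 2)) (hc : ¬ hasAdj r c) :
    hMap r hr k (D k (Finsupp.single (cls r c hc) 1))
      + D (k + 1) (hMap r hr (k + 1) (Finsupp.single (cls r c hc) 1))
    = Finsupp.single (cls r c hc) 1 := by
  by_cases h0 : r 0 (c.1 0)
  · rw [hMap_single_pos r hr _ c hc h0, map_zero, add_zero]
    rw [hD k c hc, map_sum, Fin.sum_univ_succ]
    have hf0 : ¬ hasAdj r (face 0 c) := face_zero_not_hasAdj c hc
    have hf1 : (face 0 c).1 0 = c.1 1 := by
      show c.1 ((0 : Fin (k + 2)).succAbove 0) = c.1 1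
      rw [Fin.succAbove_zero]
      rfl
    have h0' : ¬ r 0 ((face 0 c).1 0) := by
      rw [hf1]
      intro hcon
      exact hc ⟨0, 1, by simp, hr.trans (hr.symm h0) hcon⟩
    have hne' := ne_zero_of_not_r hr (face 0 c) h0'
    have hB' := consChain_not_hasAdj (face 0 c) hne' hf0 h0'
    rw [dif_pos hf0, map_smul, hMap_single_neg r hr _ _ hf0 h0' hne' hB',
      cls_cons_face_zero hr c hc hne' hB' h0]
    have hrest : ∀ i : Fin (k + 1),
        hMap r hr k (if h : ¬ hasAdj r (face i.succ c) then
          ((-1 : ℂ) ^ ((i.succ : Fin (k + 2)) : ℕ)) • Finsupp.single (cls r (face i.succ c) h) 1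
        else 0) = 0 := by
      intro i
      by_cases hA : ¬ hasAdj r (face i.succ c)
      · rw [dif_pos hA, map_smul]
        have : r 0 ((face i.succ c).1 0) := by
          show r 0 (c.1 (Fin.succAbove i.succ 0))
          rw [Fin.succ_succAbove_zero]
          exact h0
        rw [hMap_single_pos r hr _ _ hA this, smul_zero]
      · rw [dif_neg hA, map_zero]
    rw [Finset.sum_congr rfl (fun i _ => hrest i), Finset.sum_const_zero, add_zero]
    simp
  · have hne := ne_zero_of_not_r hr c h0
    have hB := consChain_not_hasAdj c hne hc h0
    rw [hMap_single_neg r hr _ c hc h0 hne hB, hD (k + 1) (consChain c hne) hB,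
      Fin.sum_univ_succ]
    have hf0 : face 0 (consChain c hne) = c := face_zero_cons c hne
    have hd0 : (if h : ¬ hasAdj r (face 0 (consChain c hne)) then
        ((-1 : ℂ) ^ (((0 : Fin (k + 3))) : ℕ)) •
          Finsupp.single (cls r (face 0 (consChain c hne)) h) 1
      else (0 : (CSet n r (k + 1)) →₀ ℂ)) = Finsupp.single (cls r c hc) 1 := by
      rw [dif_pos (by rw [hf0]; exact hc)]
      rw [cls_eq_of_eq r hf0 _ hc]
      simp
    rw [hd0, hD k c hc, map_sum]
    have hterm : ∀ ℓ : Fin (k + 2),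
        hMap r hr k (if h : ¬ hasAdj r (face ℓ c) then
          ((-1 : ℂ) ^ (ℓ : ℕ)) • Finsupp.single (cls r (face ℓ c) h) 1 else 0)
        + (if h : ¬ hasAdj r (face ℓ.succ (consChain c hne)) then
            ((-1 : ℂ) ^ ((ℓ.succ : Fin (k + 3)) : ℕ)) •
              Finsupp.single (cls r (face ℓ.succ (consChain c hne)) h) 1 else 0) = 0 := by
      intro ℓ
      have hface : (face ℓ.succ (consChain c hne)).1 = Fin.cons (0 : Fin (n + 1)) (face ℓ c).1 :=
        face_succ_cons c hne ℓ
      have hadjiff : hasAdj r (face ℓ.succ (consChain c hne)) ↔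
          r 0 ((face ℓ c).1 0) ∨ hasAdj r (face ℓ c) :=
        hasAdj_cons_iff (face ℓ c) _ hface
      by_cases hA : hasAdj r (face ℓ c)
      · rw [dif_neg (not_not_intro hA), dif_neg (not_not_intro (hadjiff.mpr (Or.inr hA))),
          map_zero, add_zero]
      · by_cases h0' : r 0 ((face ℓ c).1 0)
        · rw [dif_pos hA, map_smul, hMap_single_pos r hr _ _ hA h0', smul_zero,
            dif_neg (not_not_intro (hadjiff.mpr (Or.inl h0'))), add_zero]
        · have hne' := ne_zero_of_not_r hr (face ℓ c) h0'
          have hB' := consChain_not_hasAdj (face ℓ c) hne' hA h0'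
          have hBc : ¬ hasAdj r (face ℓ.succ (consChain c hne)) :=
            fun h => (hadjiff.mp h).elim h0' hA
          rw [dif_pos hA, map_smul, hMap_single_neg r hr _ _ hA h0' hne' hB', dif_pos hBc,
            cls_eq_of_eq r (Subtype.ext hface) hBc hB']
          have hv : ((ℓ.succ : Fin (k + 3)) : ℕ) = (ℓ : ℕ) + 1 := Fin.val_succ ℓ
          rw [hv, pow_succ, mul_neg_one, neg_smul, add_neg_cancel]
    calc (∑ ℓ : Fin (k + 2), hMap r hr k _) + (Finsupp.single (cls r c hc) 1 + ∑ ℓ : Fin (k + 2), _)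
        = Finsupp.single (cls r c hc) 1 + ∑ ℓ : Fin (k + 2),
            (hMap r hr k (if h : ¬ hasAdj r (face ℓ c) then
              ((-1 : ℂ) ^ (ℓ : ℕ)) • Finsupp.single (cls r (face ℓ c) h) 1 else 0)
            + (if h : ¬ hasAdj r (face ℓ.succ (consChain c hne)) then
                ((-1 : ℂ) ^ ((ℓ.succ : Fin (k + 3)) : ℕ)) •
                  Finsupp.single (cls r (face ℓ.succ (consChain c hne)) h) 1 else 0)) := by
          rw [Finset.sum_add_distrib]; abel
      _ = Finsupp.single (cls r c hc) 1 := by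
          rw [Finset.sum_congr rfl (fun ℓ _ => hterm ℓ), Finset.sum_const_zero, add_zero]


lemma key_zero (hr : Equivalence r)
    (D : ∀ k : ℕ, ((CSet n r (k + 1)) →₀ ℂ) →ₗ[ℂ] ((CSet n r k) →₀ ℂ))
    (hD : ∀ (k : ℕ) (c : Chain n (k + 2)) (hc : ¬ hasAdj r c),
      D k (Finsupp.single (cls r c hc) 1) =
        ∑ ℓ : Fin (k + 2),
          if h : ¬ hasAdj r (face ℓ c) then
            ((-1 : ℂ) ^ (ℓ : ℕ)) • Finsupp.single (cls r (face ℓ c) h) 1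
          else 0)
    (D0 : ((CSet n r 0) →₀ ℂ) →ₗ[ℂ] ℂ) (hD0 : ∀ q : CSet n r 0, D0 (Finsupp.single q 1) = 1)
    (hneg : ℂ →ₗ[ℂ] ((CSet n r 0) →₀ ℂ))
    (hhneg : hneg 1 = Finsupp.single (cls r (zeroChain n) (zeroChain_not_hasAdj r)) 1)
    (c : Chain n 1) (hc : ¬ hasAdj r c) :
    hneg (D0 (Finsupp.single (cls r c hc) 1))
      + D 0 (hMap r hr 0 (Finsupp.single (cls r c hc) 1))
    = Finsupp.single (cls r c hc) 1 := by
  rw [hD0, hhneg]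
  by_cases h0 : r 0 (c.1 0)
  · rw [hMap_single_pos r hr _ c hc h0, map_zero, add_zero]
    have hcl : cls r (zeroChain n) (zeroChain_not_hasAdj r) = cls r c hc := by
      apply Quot.sound
      intro i
      have hi : i = 0 := Fin.ext (by omega)
      subst hi
      exact h0
    rw [hcl]
  · have hne := ne_zero_of_not_r hr c h0
    have hB := consChain_not_hasAdj c hne hc h0
    rw [hMap_single_neg r hr _ c hc h0 hne hB, hD 0 (consChain c hne) hB, Fin.sum_univ_two]
    have hf0 : face (0 : Fin 2) (consChain c hne) = c := face_zero_cons c hne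
    have hsa : (1 : Fin 2).succAbove 0 = 0 := by decide
    have hfz : face (1 : Fin 2) (consChain c hne) = zeroChain n := by
      apply Subtype.ext
      funext i
      have hi : i = 0 := Fin.ext (by omega)
      subst hi
      simp [face, consChain, zeroChain, hsa]
    rw [dif_pos (show ¬ hasAdj r (face (0 : Fin 2) (consChain c hne)) from by rw [hf0]; exact hc),
      dif_pos (show ¬ hasAdj r (face (1 : Fin 2) (consChain c hne)) from not_hasAdj_one _),
      cls_eq_of_eq r hf0 _ hc, cls_eq_of_eq r hfz _ (zeroChain_not_hasAdj r)]
    simp only [Fin.val_zero, pow_zero, one_smul, Fin.val_one, pow_one, neg_smul]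
    abel

end MyAux

/-- The maps `h_k` and `h₋₁` are well defined and form a contracting homotopy:
`D_0 ∘ h₋₁ = id` and `h_{k-1} ∘ D_k + D_{k+1} ∘ h_k = id` for `0 ≤ k ≤ n`
(below, the case `k = 0` is stated separately and `k = j + 1` for `1 ≤ k ≤ n`;
`D_{n+1} = 0` automatically since `C_{n+1}` is empty). -/
theorem stmt7 (n : ℕ) (r : Fin (n + 1) → Fin (n + 1) → Prop) (hr : Equivalence r)
    (hadj : ∀ i j : Fin (n + 1), r i j → (i : ℕ) ≠ (j : ℕ) + 1 ∧ (j : ℕ) ≠ (i : ℕ) + 1)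
    (D : ∀ k : ℕ, ((CSet n r (k + 1)) →₀ ℂ) →ₗ[ℂ] ((CSet n r k) →₀ ℂ))
    (hD : IsD n r D)
    (D0 : ((CSet n r 0) →₀ ℂ) →ₗ[ℂ] ℂ) (hD0 : IsD0 n r D0) :
    ∃ (h : ∀ k : ℕ, ((CSet n r k) →₀ ℂ) →ₗ[ℂ] ((CSet n r (k + 1)) →₀ ℂ))
      (hneg : ℂ →ₗ[ℂ] ((CSet n r 0) →₀ ℂ)),
      IsH n r h ∧ IsHneg n r hneg ∧
      D0.comp hneg = LinearMap.id ∧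
      hneg.comp D0 + (D 0).comp (h 0) = LinearMap.id ∧
      ∀ j : ℕ, j + 1 ≤ n →
        (h j).comp (D j) + (D (j + 1)).comp (h (j + 1)) = LinearMap.id := by
  
  have hhneg : (LinearMap.toSpanSingleton ℂ ((CSet n r 0) →₀ ℂ)
      (Finsupp.single (cls r (zeroChain n) (zeroChain_not_hasAdj r)) 1)) 1
      = Finsupp.single (cls r (zeroChain n) (zeroChain_not_hasAdj r)) 1 := by
    simp [LinearMap.toSpanSingleton_apply]
  refine ⟨fun k => hMap r hr k,
    LinearMap.toSpanSingleton ℂ _ (Finsupp.single (cls r (zeroChain n) (zeroChain_not_hasAdj r)) 1),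
    ?_, hhneg, ?_, ?_, ?_⟩
  · intro k c hc
    refine ⟨hMap_single_pos r hr k c hc, fun h0 => ?_⟩
    exact ⟨cons_strictMono c (ne_zero_of_not_r hr c h0),
      consChain_not_hasAdj c (ne_zero_of_not_r hr c h0) hc h0,
      hMap_single_neg r hr k c hc h0 (ne_zero_of_not_r hr c h0)
        (consChain_not_hasAdj c (ne_zero_of_not_r hr c h0) hc h0)⟩
  · apply LinearMap.ext_ring
    simp only [LinearMap.comp_apply, LinearMap.id_apply, hhneg]
    rw [hD0]
  · apply lhom_ext1
    intro q
    induction q using Quot.ind with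
    | _ a => ?_
    obtain ⟨c, hc⟩ := a
    simp only [LinearMap.add_apply, LinearMap.comp_apply, LinearMap.id_apply]
    exact key_zero r hr D hD D0 hD0 _ hhneg c hc
  · intro j hj
    apply lhom_ext1
    intro q
    induction q using Quot.ind with
    | _ a => ?_
    obtain ⟨c, hc⟩ := a
    simp only [LinearMap.add_apply, LinearMap.comp_apply, LinearMap.id_apply]
    exact key_general r hr D hD j c hc
end

section
/- For an equivalence n-simplex {C_k}, the reduced Euler characteristic vanishes: Σ_{k=0}^{n} (−1)^k #C_k = 1, where #C_k denotes the (finite) cardinality of C_k. -/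
open Finset
open scoped Classical

section EqSimplex

variable {n : ℕ} (r : Fin (n + 1) → Fin (n + 1) → Prop)

instance instFiniteChain (n m : ℕ) : Finite (Chain n m) :=
  inferInstanceAs (Finite {c : Fin m → Fin (n + 1) // StrictMono c})

/-- Pointwise-greedy-minimality of a tuple. -/
def Canon {m : ℕ} (c : Fin m → Fin (n + 1)) : Prop :=
  ∀ (i : Fin m) (x : Fin (n + 1)), r x (c i) →
    (∀ j : Fin m, (j : ℕ) + 1 = (i : ℕ) → c j < x) → c i ≤ x

def Good {m : ℕ} (c : Chain n m) : Prop := Canon r c.1 ∧ ¬ hasAdj r c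

theorem canon_unique (hr : Equivalence r) {m : ℕ} {c c' : Chain n m}
    (h : Canon r c.1) (h' : Canon r c'.1) (happ : ∀ i, r (c.1 i) (c'.1 i)) : c = c' := by
  have key : ∀ N : ℕ, ∀ i : Fin m, (i : ℕ) = N → c.1 i = c'.1 i := by
    intro N
    induction N using Nat.strong_induction_on with
    | _ N ih =>
      intro i hi
      have h1 : c'.1 i ≤ c.1 i := by
        apply h' i _ (happ i)
        intro j hj
        have hj' : c.1 j = c'.1 j := ih j (by omega) j rfl
        rw [← hj']
        exact c.2 (show j < i by rw [Fin.lt_def]; omega)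
      have h2 : c.1 i ≤ c'.1 i := by
        apply h i _ (hr.symm (happ i))
        intro j hj
        have hj' : c.1 j = c'.1 j := ih j (by omega) j rfl
        rw [hj']
        exact c'.2 (show j < i by rw [Fin.lt_def]; omega)
      exact le_antisymm h2 h1
  exact Subtype.ext (funext fun i => key i i rfl)

noncomputable def gmin (f : ℕ → Fin (n + 1)) : ℕ → Fin (n + 1)
  | 0 =>
    if h : (Finset.univ.filter (fun x => r x (f 0))).Nonempty then
      (Finset.univ.filter (fun x => r x (f 0))).min' h
    else f 0
  | N + 1 =>
    if h : (Finset.univ.filter (fun x => r x (f (N + 1)) ∧ gmin f N < x)).Nonempty then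
      (Finset.univ.filter (fun x => r x (f (N + 1)) ∧ gmin f N < x)).min' h
    else f (N + 1)

theorem gmin_spec (hr : Equivalence r) (f : ℕ → Fin (n + 1)) (K : ℕ)
    (hf : ∀ N, N < K → f N < f (N + 1)) :
    ∀ N, N ≤ K → r (gmin r f N) (f N) ∧ gmin r f N ≤ f N ∧
      (∀ N', N = N' + 1 → gmin r f N' < gmin r f N) := by
  intro N
  induction N with
  | zero =>
    intro _
    have hne : (Finset.univ.filter (fun x => r x (f 0))).Nonempty :=
      ⟨f 0, by simp [hr.refl]⟩
    have e : gmin r f 0 = (Finset.univ.filter (fun x => r x (f 0))).min' hne := by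
      simp only [gmin]
      rw [dif_pos hne]
    have hmem := Finset.min'_mem _ hne
    simp only [Finset.mem_filter, Finset.mem_univ, true_and] at hmem
    refine ⟨by rw [e]; exact hmem, ?_, ?_⟩
    · rw [e]; exact Finset.min'_le _ _ (by simp [hr.refl])
    · intro N' hN'; exact absurd hN' (by omega)
  | succ N ih =>
    intro hN
    have ihN := ih (by omega)
    have hlt : gmin r f N < f (N + 1) := lt_of_le_of_lt ihN.2.1 (hf N (by omega))
    have hT : f (N + 1) ∈ Finset.univ.filter (fun x => r x (f (N + 1)) ∧ gmin r f N < x) := by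
      simp [hr.refl, hlt]
    have hne : (Finset.univ.filter (fun x => r x (f (N + 1)) ∧ gmin r f N < x)).Nonempty :=
      ⟨f (N + 1), hT⟩
    have e : gmin r f (N + 1) =
        (Finset.univ.filter (fun x => r x (f (N + 1)) ∧ gmin r f N < x)).min' hne := by
      simp only [gmin]
      rw [dif_pos hne]
    have hmem := Finset.min'_mem _ hne
    simp only [Finset.mem_filter, Finset.mem_univ, true_and] at hmem
    refine ⟨by rw [e]; exact hmem.1, by rw [e]; exact Finset.min'_le _ _ hT, ?_⟩
    intro N' hN'
    obtain rfl : N' = N := by omega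
    rw [e]; exact hmem.2


def extF {k : ℕ} (c : Chain n (k + 1)) : ℕ → Fin (n + 1) :=
  fun N => c.1 ⟨min N k, by omega⟩

theorem extF_coe {k : ℕ} (c : Chain n (k + 1)) (i : Fin (k + 1)) : extF c (i : ℕ) = c.1 i := by
  have hi : (i : ℕ) ≤ k := by omega
  simp only [extF]
  congr 1
  exact Fin.ext (by simp [Nat.min_eq_left hi])

theorem extF_mono {k : ℕ} (c : Chain n (k + 1)) : ∀ N, N < k → extF c N < extF c (N + 1) := by
  intro N hN
  apply c.2
  rw [Fin.lt_def]
  simp only []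
  omega

noncomputable def canonChain (hr : Equivalence r) {k : ℕ} (c : Chain n (k + 1)) :
    Chain n (k + 1) := by
  refine ⟨fun i => gmin r (extF c) (i : ℕ), ?_⟩
  have key : ∀ b, b ≤ k → ∀ a, a < b → gmin r (extF c) a < gmin r (extF c) b := by
    intro b
    induction b with
    | zero => intro _ a ha; exact absurd ha (by omega)
    | succ b ihb =>
      intro hb a ha
      have hstep : gmin r (extF c) b < gmin r (extF c) (b + 1) :=
        (gmin_spec r hr (extF c) k (extF_mono c) (b + 1) hb).2.2 b rfl
      rcases Nat.lt_or_ge a b with h | h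
      · exact lt_trans (ihb (by omega) a h) hstep
      · obtain rfl : a = b := by omega
        exact hstep
  intro i j hij
  exact key (j : ℕ) (by omega) (i : ℕ) (by rwa [Fin.lt_def] at hij)

theorem canonChain_approx (hr : Equivalence r) {k : ℕ} (c : Chain n (k + 1)) :
    ∀ i, r ((canonChain r hr c).1 i) (c.1 i) := by
  intro i
  have := (gmin_spec r hr (extF c) k (extF_mono c) (i : ℕ) (by omega)).1
  rwa [extF_coe] at this

theorem canonChain_canon (hr : Equivalence r) {k : ℕ} (c : Chain n (k + 1)) :
    Canon r (canonChain r hr c).1 := by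
  intro i x hx hprev
  show gmin r (extF c) (i : ℕ) ≤ x
  have hx' : r x (gmin r (extF c) (i : ℕ)) := hx
  cases hiv : (i : ℕ) with
  | zero =>
    rw [hiv] at hx'
    have hne : (Finset.univ.filter (fun y => r y (extF c 0))).Nonempty :=
      ⟨extF c 0, by simp [hr.refl]⟩
    have e : gmin r (extF c) 0 = (Finset.univ.filter (fun y => r y (extF c 0))).min' hne := by
      simp only [gmin]; rw [dif_pos hne]
    have hr0 : r (gmin r (extF c) 0) (extF c 0) :=
      (gmin_spec r hr (extF c) k (extF_mono c) 0 (by omega)).1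
    rw [e]
    apply Finset.min'_le
    simp only [Finset.mem_filter, Finset.mem_univ, true_and]
    exact hr.trans hx' hr0
  | succ N =>
    have hNk : N + 1 ≤ k := by have := i.isLt; omega
    rw [hiv] at hx'
    have s1 := gmin_spec r hr (extF c) k (extF_mono c) N (by omega)
    have hlt : gmin r (extF c) N < extF c (N + 1) :=
      lt_of_le_of_lt s1.2.1 (extF_mono c N (by omega))
    have hne : (Finset.univ.filter
        (fun y => r y (extF c (N + 1)) ∧ gmin r (extF c) N < y)).Nonempty :=
      ⟨extF c (N + 1), by simp [hr.refl, hlt]⟩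
    have e : gmin r (extF c) (N + 1) = (Finset.univ.filter
        (fun y => r y (extF c (N + 1)) ∧ gmin r (extF c) N < y)).min' hne := by
      simp only [gmin]; rw [dif_pos hne]
    have hrN1 : r (gmin r (extF c) (N + 1)) (extF c (N + 1)) :=
      (gmin_spec r hr (extF c) k (extF_mono c) (N + 1) hNk).1
    have hprevN : gmin r (extF c) N < x := by
      have := hprev ⟨N, by omega⟩ (by simp [hiv])
      exact this
    rw [e]
    apply Finset.min'_le
    simp only [Finset.mem_filter, Finset.mem_univ, true_and]
    exact ⟨hr.trans hx' hrN1, hprevN⟩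

theorem canonChain_noAdj (hr : Equivalence r) {k : ℕ} (c : Chain n (k + 1))
    (hc : ¬ hasAdj r c) : ¬ hasAdj r (canonChain r hr c) := by
  rintro ⟨i, j, hij, hrel⟩
  exact hc ⟨i, j, hij,
    hr.trans (hr.symm (canonChain_approx r hr c i)) (hr.trans hrel (canonChain_approx r hr c j))⟩

noncomputable def goodEquiv (hr : Equivalence r) (k : ℕ) :
    {c : Chain n (k + 1) // Good r c} ≃ CSet n r k where
  toFun c := cls r c.1 c.2.2
  invFun := Quot.lift
    (fun c : {c : Chain n (k + 1) // ¬ hasAdj r c} =>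
      (⟨canonChain r hr c.1, canonChain_canon r hr c.1, canonChain_noAdj r hr c.1 c.2⟩ :
        {c : Chain n (k + 1) // Good r c}))
    (by
      intro a b hab
      refine Subtype.ext ?_
      apply canon_unique r hr (canonChain_canon r hr a.1) (canonChain_canon r hr b.1)
      intro i
      exact hr.trans (canonChain_approx r hr a.1 i)
        (hr.trans (hab i) (hr.symm (canonChain_approx r hr b.1 i))))
  left_inv c := by
    apply Subtype.ext
    exact canon_unique r hr (canonChain_canon r hr c.1) c.2.1 (canonChain_approx r hr c.1)
  right_inv := by
    apply Quot.ind
    intro c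
    apply Quot.sound
    intro i
    exact canonChain_approx r hr c.1 i


theorem strictMono_cons {k : ℕ} {c : Fin (k + 1) → Fin (n + 1)} (hc : StrictMono c)
    (h0 : (0 : Fin (n + 1)) < c 0) :
    StrictMono (Fin.cons 0 c : Fin (k + 2) → Fin (n + 1)) := by
  rw [Fin.strictMono_iff_lt_succ]
  intro i
  refine Fin.cases ?_ ?_ i
  · simpa using h0
  · intro j
    have e : (Fin.succ j).castSucc = (Fin.castSucc j).succ := rfl
    rw [e, Fin.cons_succ, Fin.cons_succ]
    exact hc ((Fin.castSucc_lt_succ (i := j)))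

theorem canon_cons {k : ℕ} {c : Chain n (k + 1)} (h : Canon r c.1) :
    Canon r (Fin.cons 0 c.1 : Fin (k + 2) → Fin (n + 1)) := by
  intro i x hx hprev
  rcases Fin.eq_zero_or_eq_succ i with rfl | ⟨j, rfl⟩
  · rw [Fin.cons_zero]
    exact Fin.zero_le x
  · rw [Fin.cons_succ] at hx ⊢
    apply h j x hx
    intro j' hj'
    have := hprev j'.succ (by simp [Fin.val_succ]; omega)
    rwa [Fin.cons_succ] at this

theorem noAdj_cons {k : ℕ} {c : Chain n (k + 1)} (h : Canon r c.1) (hadjc : ¬ hasAdj r c)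
    (h0 : c.1 0 ≠ 0) (hm : StrictMono (Fin.cons 0 c.1 : Fin (k + 2) → Fin (n + 1))) :
    ¬ hasAdj r (⟨Fin.cons 0 c.1, hm⟩ : Chain n (k + 2)) := by
  rintro ⟨i, j, hij, hrel⟩
  simp only at hrel
  rcases Fin.eq_zero_or_eq_succ i with rfl | ⟨i', rfl⟩
  · have hj : j = (0 : Fin (k + 1)).succ := Fin.ext (by simp at hij ⊢; omega)
    subst hj
    rw [Fin.cons_zero, Fin.cons_succ] at hrel
    have hle : c.1 0 ≤ 0 := h 0 0 hrel (fun j' hj' => absurd hj' (by simp))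
    exact h0 (le_antisymm hle (Fin.zero_le _))
  · rcases Fin.eq_zero_or_eq_succ j with rfl | ⟨j', rfl⟩
    · simp [Fin.val_succ] at hij
    · rw [Fin.cons_succ, Fin.cons_succ] at hrel
      exact hadjc ⟨i', j', by simp [Fin.val_succ] at hij; omega, hrel⟩

theorem canon_tail {k : ℕ} {c : Chain n (k + 2)} (h : Canon r c.1) (hadjc : ¬ hasAdj r c)
    (h0 : c.1 0 = 0) : Canon r (Fin.tail c.1 : Fin (k + 1) → Fin (n + 1)) := by
  intro i x hx hprev
  show c.1 i.succ ≤ x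
  apply h i.succ x hx
  intro j hj
  have hji : (j : ℕ) = (i : ℕ) := by simp [Fin.val_succ] at hj; omega
  cases hiv : (i : ℕ) with
  | zero =>
    have hj0 : j = 0 := Fin.ext (by simp only [Fin.val_zero]; omega)
    subst hj0
    rw [h0]
    rcases eq_or_ne x 0 with rfl | hxne
    · exfalso
      apply hadjc
      refine ⟨0, i.succ, by simp [Fin.val_succ, hiv], ?_⟩
      rw [h0]
      exact hx
    · exact Fin.pos_iff_ne_zero.mpr hxne
  | succ N =>
    have hNlt : N < k + 1 := by have := i.isLt; omega
    have := hprev ⟨N, hNlt⟩ (by simp [hiv])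
    have hje : j = (⟨N, hNlt⟩ : Fin (k + 1)).succ := Fin.ext (by simp; omega)
    rw [hje]
    exact this

theorem noAdj_tail {k : ℕ} {c : Chain n (k + 2)} (hadjc : ¬ hasAdj r c)
    (hm : StrictMono (Fin.tail c.1 : Fin (k + 1) → Fin (n + 1))) :
    ¬ hasAdj r (⟨Fin.tail c.1, hm⟩ : Chain n (k + 1)) := by
  rintro ⟨i, j, hij, hrel⟩
  exact hadjc ⟨i.succ, j.succ, by simp [Fin.val_succ]; omega, hrel⟩

theorem strictMono_tail {k : ℕ} (c : Chain n (k + 2)) :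
    StrictMono (Fin.tail c.1 : Fin (k + 1) → Fin (n + 1)) := by
  intro i j hij
  exact c.2 (by rw [Fin.lt_def]; simp [Fin.val_succ]; rwa [Fin.lt_def] at hij)

noncomputable def consEquiv (k : ℕ) :
    {c : Chain n (k + 1) // Good r c ∧ c.1 0 ≠ 0} ≃
      {c : Chain n (k + 2) // Good r c ∧ c.1 0 = 0} where
  toFun c := ⟨⟨Fin.cons 0 c.1.1,
      strictMono_cons c.1.2 (Fin.pos_iff_ne_zero.mpr c.2.2)⟩,
    ⟨canon_cons r c.2.1.1, noAdj_cons r c.2.1.1 c.2.1.2 c.2.2 _⟩, by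
      show (Fin.cons 0 c.1.1 : Fin (k + 2) → Fin (n + 1)) 0 = 0
      exact Fin.cons_zero _ _⟩
  invFun c := ⟨⟨Fin.tail c.1.1, strictMono_tail c.1⟩,
    ⟨canon_tail r c.2.1.1 c.2.1.2 c.2.2, noAdj_tail r c.2.1.2 _⟩, by
      show c.1.1 (0 : Fin (k + 1)).succ ≠ 0
      have h01 : c.1.1 0 < c.1.1 (0 : Fin (k + 1)).succ := c.1.2 (by rw [Fin.lt_def]; simp)
      rw [c.2.2] at h01
      exact Fin.pos_iff_ne_zero.mp h01⟩
  left_inv c := by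
    apply Subtype.ext
    apply Subtype.ext
    show Fin.tail (Fin.cons 0 c.1.1 : Fin (k + 2) → Fin (n + 1)) = c.1.1
    exact Fin.tail_cons _ _
  right_inv c := by
    apply Subtype.ext
    apply Subtype.ext
    show (Fin.cons 0 (Fin.tail c.1.1) : Fin (k + 2) → Fin (n + 1)) = c.1.1
    have h := Fin.cons_self_tail (q := c.1.1)
    rw [c.2.2] at h
    exact h


noncomputable def splitEquiv {α : Type*} (p q : α → Prop) :
    {a // p a ∧ q a} ⊕ {a // p a ∧ ¬ q a} ≃ {a // p a} where
  toFun x := Sum.elim (fun a => ⟨a.1, a.2.1⟩) (fun a => ⟨a.1, a.2.1⟩) x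
  invFun a := if h : q a.1 then Sum.inl ⟨a.1, a.2, h⟩ else Sum.inr ⟨a.1, a.2, h⟩
  left_inv x := by
    rcases x with ⟨a, ha, hq⟩ | ⟨a, ha, hq⟩ <;> simp [hq]
  right_inv a := by by_cases h : q a.1 <;> simp [h]

theorem cardSplit (k : ℕ) (hr : Equivalence r) :
    (Nat.card (CSet n r k) : ℤ) =
      (Nat.card {c : Chain n (k + 1) // Good r c ∧ c.1 0 = 0} : ℤ) +
      (Nat.card {c : Chain n (k + 2) // Good r c ∧ c.1 0 = 0} : ℤ) := by
  have e1 : Nat.card (CSet n r k) = Nat.card {c : Chain n (k + 1) // Good r c} :=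
    (Nat.card_congr (goodEquiv r hr k)).symm
  have e2 : Nat.card {c : Chain n (k + 1) // Good r c} =
      Nat.card {c : Chain n (k + 1) // Good r c ∧ c.1 0 = 0} +
      Nat.card {c : Chain n (k + 1) // Good r c ∧ ¬ (c.1 0 = 0)} :=
    (Nat.card_congr (splitEquiv (Good r) (fun c => c.1 0 = 0)).symm).trans Nat.card_sum
  have e3 : Nat.card {c : Chain n (k + 1) // Good r c ∧ ¬ (c.1 0 = 0)} =
      Nat.card {c : Chain n (k + 2) // Good r c ∧ c.1 0 = 0} :=
    Nat.card_congr (consEquiv r k)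
  rw [e1, e2, e3]
  push_cast
  ring

theorem cardBase (hr : Equivalence r) :
    Nat.card {c : Chain n (0 + 1) // Good r c ∧ c.1 0 = 0} = 1 := by
  rw [Nat.card_eq_one_iff_unique]
  constructor
  · constructor
    intro a b
    apply Subtype.ext
    apply Subtype.ext
    funext i
    have hi : i = 0 := Fin.ext (by have := i.isLt; omega)
    subst hi
    rw [a.2.2, b.2.2]
  · refine ⟨⟨⟨fun _ => 0, ?_⟩, ⟨?_, ?_⟩, rfl⟩⟩
    · intro i j hij
      have : i = j := Fin.ext (by have := i.isLt; have := j.isLt; omega)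
      exact absurd (this ▸ hij) (lt_irrefl j)
    · intro i x hx _
      exact Fin.zero_le x
    · rintro ⟨i, j, hij, -⟩
      have hi := i.isLt
      have hj := j.isLt
      omega

theorem cardTop (m : ℕ) (hm : n + 2 ≤ m) (P : Chain n m → Prop) :
    Nat.card {c : Chain n m // P c} = 0 := by
  haveI : IsEmpty (Chain n m) := by
    constructor
    intro c
    have := Fintype.card_le_of_injective c.1 c.2.injective
    simp only [Fintype.card_fin] at this
    omega
  exact Nat.card_of_isEmpty

end EqSimplex

/-- The reduced Euler characteristic of an equivalence `n`-simplex vanishes: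
`∑_{k=0}^{n} (−1)^k #C_k = 1`. -/
theorem stmt9 (n : ℕ) (r : Fin (n + 1) → Fin (n + 1) → Prop) (hr : Equivalence r)
    (hadj : ∀ i j : Fin (n + 1), r i j → (i : ℕ) ≠ (j : ℕ) + 1 ∧ (j : ℕ) ≠ (i : ℕ) + 1) :
    ∑ k ∈ Finset.range (n + 1), (-1 : ℤ) ^ k * Nat.card (CSet n r k) = 1 := by
  have tele := Finset.sum_range_sub'
    (fun k => (-1 : ℤ) ^ k * (Nat.card {c : Chain n (k + 1) // Good r c ∧ c.1 0 = 0} : ℤ))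
    (n + 1)
  have hstep : ∀ k ∈ Finset.range (n + 1),
      (-1 : ℤ) ^ k * (Nat.card (CSet n r k) : ℤ) =
      (-1 : ℤ) ^ k * (Nat.card {c : Chain n (k + 1) // Good r c ∧ c.1 0 = 0} : ℤ) -
      (-1 : ℤ) ^ (k + 1) * (Nat.card {c : Chain n (k + 1 + 1) // Good r c ∧ c.1 0 = 0} : ℤ) := by
    intro k _
    rw [cardSplit r k hr]
    ring
  rw [Finset.sum_congr rfl hstep, tele, cardBase r hr,
    cardTop (n + 1 + 1) (by omega) _]
  simp
end
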